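/- arXiv:1507.05350 — 3 statements merged into one kernel-verified Lean document; each statement's English description precedes it below -/
import Mathlib

section
/- Let θ be a proper convex piecewise linear function on ℝ^m, z̄ ∈ dom θ, and v̄ ∈ ∂θ(z̄). Then the second-order subdifferential of θ at z̄ relative to v̄ evaluated at 0 is given by ∂²θ(z̄,v̄)(0) = span{a_i − a_j : i,j ∈ K(z̄)} + span{d_i : i ∈ I(z̄)}. -/
noncomputable section
open Set Filter Topology Metric
open scoped RealInnerProductSpace Pointwise NNReal Classical

/-- `Euc m` is the Euclidean space `ℝ^m`. -/
abbrev Euc (m : ℕ) := EuclideanSpace ℝ (Fin m)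

variable {F G : Type*} [NormedAddCommGroup F] [InnerProductSpace ℝ F]
  [NormedAddCommGroup G] [InnerProductSpace ℝ G]

/-- The (convex) subdifferential of an extended-real-valued function:
`∂θ(z) = {v : θ(z') ≥ θ(z) + ⟨v, z' - z⟩ for all z'}`. -/
def subdiff (θ : F → EReal) (z : F) : Set F :=
  {v | ∀ z', θ z + ((⟪v, z' - z⟫ : ℝ) : EReal) ≤ θ z'}

/-- The Fréchet (regular) normal cone to `Ω` at `x`:
vectors `v` with `limsup_{y → x, y ∈ Ω} ⟨v, y - x⟩ / ‖y - x‖ ≤ 0`. -/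
def frechetNormal (Ω : Set F) (x : F) : Set F :=
  {v | Filter.limsup (fun y => ⟪v, y - x⟫ / ‖y - x‖) (𝓝[Ω] x) ≤ 0}

/-- The limiting (Mordukhovich) normal cone to `Ω` at `x`. -/
def limitingNormal (Ω : Set F) (x : F) : Set F :=
  {v | ∃ xs vs : ℕ → F, (∀ k, xs k ∈ Ω) ∧ Filter.Tendsto xs Filter.atTop (𝓝 x) ∧
    Filter.Tendsto vs Filter.atTop (𝓝 v) ∧ ∀ k, vs k ∈ frechetNormal Ω (xs k)}

/-- Pairing into the `ℓ²`-product of two inner product spaces. -/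
def pl2 (x : F) (y : G) : WithLp 2 (F × G) := (WithLp.equiv 2 (F × G)).symm (x, y)

/-- The second-order subdifferential (generalized Hessian)
`∂²θ(z,v)(u) = {w : (w,-u) ∈ N((z,v); gph ∂θ)}`. -/
def sosd (θ : F → EReal) (z v : F) (u : F) : Set F :=
  {w | pl2 w (-u) ∈ limitingNormal
    {q : WithLp 2 (F × F) | ((WithLp.equiv 2 (F × F)) q).2 ∈ subdiff θ ((WithLp.equiv 2 (F × F)) q).1}
    (pl2 z v)}

/-- The polyhedral domain `{z : ⟨d i, z⟩ ≤ β i for all i}` of a CPWL function. -/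
def cpwlDom {m p : ℕ} (d : Fin p → Euc m) (β : Fin p → ℝ) : Set (Euc m) :=
  {z | ∀ i, ⟪d i, z⟫ ≤ β i}

/-- The CPWL function determined by the data `(a, α, d, β)`:
`θ(z) = max_i (⟨a i, z⟩ - α i)` on its polyhedral domain and `+∞` outside. -/
def cpwlFun {m l p : ℕ} (a : Fin l → Euc m) (α : Fin l → ℝ) (d : Fin p → Euc m)
    (β : Fin p → ℝ) : Euc m → EReal :=
  fun z => if z ∈ cpwlDom d β then (((⨆ i, (⟪a i, z⟫ - α i)) : ℝ) : EReal) else ⊤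

/-- Active indices of the max expression at `z`. -/
def Kact {m l p : ℕ} (a : Fin l → Euc m) (α : Fin l → ℝ) (d : Fin p → Euc m) (β : Fin p → ℝ)
    (z : Euc m) : Set (Fin l) :=
  {i | cpwlFun a α d β z = ((⟪a i, z⟫ - α i : ℝ) : EReal)}

/-- Active indices of the domain inequalities at `z`. -/
def Iact {m p : ℕ} (d : Fin p → Euc m) (β : Fin p → ℝ) (z : Euc m) : Set (Fin p) :=
  {i | ⟪d i, z⟫ = β i}

/-- Convex conic hull: all finite nonnegative combinations of elements of `s`. -/
def coneHull (s : Set F) : Set F :=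
  {x | ∃ (n : ℕ) (c : Fin n → ℝ) (y : Fin n → F), (∀ i, 0 ≤ c i) ∧ (∀ i, y i ∈ s) ∧
    x = ∑ i, c i • y i}

/-- `Spar θ z` is the linear subspace parallel to the affine hull of `∂θ(z)`. -/
def Spar (θ : F → EReal) (z : F) : Submodule ℝ F := (affineSpan ℝ (subdiff θ z)).direction

/-- A convex polyhedron: a finite intersection of closed halfspaces. -/
def IsPolyhedron {V : Type*} [AddCommGroup V] [Module ℝ V] (C : Set V) : Prop :=
  ∃ (N : ℕ) (f : Fin N → V →ₗ[ℝ] ℝ) (b : Fin N → ℝ), C = {x | ∀ i, f i x ≤ b i}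

/-- A proper convex piecewise linear function with values in `ℝ ∪ {+∞}`:
its epigraph is a convex polyhedron, it never takes the value `-∞`, and it is
not identically `+∞`. -/
def IsCPWL {V : Type*} [AddCommGroup V] [Module ℝ V] (f : V → EReal) : Prop :=
  IsPolyhedron {xt : V × ℝ | f xt.1 ≤ (xt.2 : EReal)} ∧ (∀ x, f x ≠ ⊥) ∧ (∃ x, f x ≠ ⊤)

/-- Local argmin set `M_γ(w,v)` of `x ↦ φ(x,w) - ⟨v,x⟩` over the ball `‖x - xb‖ ≤ γ`,
with the convention that minimizers at which the objective is `+∞` are discarded. -/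
def argminLoc {n d : ℕ} (φ : Euc n → Euc d → EReal) (xb : Euc n) (γ : ℝ) (w : Euc d)
    (v : Euc n) : Set (Euc n) :=
  {x | ‖x - xb‖ ≤ γ ∧ φ x w ≠ ⊤ ∧
    ∀ y, ‖y - xb‖ ≤ γ → φ x w - ((⟪v, x⟫ : ℝ) : EReal) ≤ φ y w - ((⟪v, y⟫ : ℝ) : EReal)}

/-- Local optimal value `m_γ(w,v)` of `x ↦ φ(x,w) - ⟨v,x⟩` over the ball `‖x - xb‖ ≤ γ`. -/
def infLoc {n d : ℕ} (φ : Euc n → Euc d → EReal) (xb : Euc n) (γ : ℝ) (w : Euc d)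
    (v : Euc n) : EReal :=
  ⨅ x ∈ {x : Euc n | ‖x - xb‖ ≤ γ}, (φ x w - ((⟪v, x⟫ : ℝ) : EReal))

/-- `xb` is a fully stable locally optimal solution of
`minimize φ(x,wb) - ⟨vb,x⟩` : for some `γ > 0` and neighborhoods `W × V` of `(wb,vb)`,
the local argmin map is single-valued and Lipschitz with value `xb` at `(wb,vb)`, and the
local optimal value function is finite and Lipschitz. -/
def FullyStableSol {n d : ℕ} (φ : Euc n → Euc d → EReal) (xb : Euc n) (wb : Euc d)
    (vb : Euc n) : Prop :=
  ∃ γ > (0 : ℝ), ∃ W ∈ 𝓝 wb, ∃ V ∈ 𝓝 vb,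
    (∃ σ : Euc d × Euc n → Euc n,
      (∃ K : ℝ≥0, LipschitzOnWith K σ (W ×ˢ V)) ∧
      (∀ w ∈ W, ∀ v ∈ V, argminLoc φ xb γ w v = {σ (w, v)}) ∧ σ (wb, vb) = xb) ∧
    (∃ μ : Euc d × Euc n → ℝ,
      (∃ K : ℝ≥0, LipschitzOnWith K μ (W ×ˢ V)) ∧
      ∀ w ∈ W, ∀ v ∈ V, infLoc φ xb γ w v = ((μ (w, v) : ℝ) : EReal))

/-- The partial limiting subdifferential `∂ₓψ(x,w)` defined through the limiting normal
cone to the epigraph of `ψ(·,w)`. -/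
def partialSubdiffX {n d : ℕ} (ψ : Euc n → Euc d → EReal) (x : Euc n) (w : Euc d) :
    Set (Euc n) :=
  {v | ∃ r : ℝ, ψ x w = (r : EReal) ∧
    pl2 v (-1 : ℝ) ∈ limitingNormal
      {q : WithLp 2 (Euc n × ℝ) |
        ψ ((WithLp.equiv 2 (Euc n × ℝ)) q).1 w ≤ ((((WithLp.equiv 2 (Euc n × ℝ)) q).2 : ℝ) : EReal)}
      (pl2 x r)}

/-- The coderivative `D*∂ₓψ(xb,wb,qb)(u)` of the partial subdifferential mapping,
via the limiting normal cone to its graph in `ℝ^n × ℝ^d × ℝ^n`. -/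
def coderivPartialSubdiffX {n d : ℕ} (ψ : Euc n → Euc d → EReal) (xb : Euc n) (wb : Euc d)
    (qb : Euc n) (u : Euc n) : Set (Euc n × Euc d) :=
  {P | pl2 (pl2 P.1 P.2) (-u) ∈ limitingNormal
    {t : WithLp 2 (WithLp 2 (Euc n × Euc d) × Euc n) |
      ((WithLp.equiv 2 (WithLp 2 (Euc n × Euc d) × Euc n)) t).2 ∈ partialSubdiffX ψ
        ((WithLp.equiv 2 (Euc n × Euc d)) (((WithLp.equiv 2 (WithLp 2 (Euc n × Euc d) × Euc n)) t).1)).1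
        ((WithLp.equiv 2 (Euc n × Euc d)) (((WithLp.equiv 2 (WithLp 2 (Euc n × Euc d) × Euc n)) t).1)).2}
    (pl2 (pl2 xb wb) qb)}

/-- Partial Hessian in `x` : the derivative in `x` of the partial gradient in `x`. -/
def hessXX {n d : ℕ} (g : Euc n → Euc d → ℝ) (xb : Euc n) (wb : Euc d) : Euc n →L[ℝ] Euc n :=
  fderiv ℝ (fun x => gradient (fun x' => g x' wb) x) xb

/-- Mixed partial Hessian: derivative in `w` of the partial gradient in `x`. -/
def hessWX {n d : ℕ} (g : Euc n → Euc d → ℝ) (xb : Euc n) (wb : Euc d) : Euc d →L[ℝ] Euc n :=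
  fderiv ℝ (fun w => gradient (fun x' => g x' w) xb) wb


-- Auxiliary development
set_option linter.unusedSectionVars false
-- basic lemmas
namespace SosdAux

variable {m l p : ℕ} (a : Fin l → Euc m) (α : Fin l → ℝ) (d : Fin p → Euc m) (β : Fin p → ℝ)

/-- The real-valued max part of a CPWL function. -/
def Mx (z : Euc m) : ℝ := ⨆ i, (⟪a i, z⟫ - α i)

lemma Mx_le (i : Fin l) (z : Euc m) : ⟪a i, z⟫ - α i ≤ Mx a α z :=
  le_ciSup (f := fun j => ⟪a j, z⟫ - α j) (Set.Finite.bddAbove (Set.finite_range _)) i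

lemma cpwl_of_mem {z : Euc m} (hz : z ∈ cpwlDom d β) :
    cpwlFun a α d β z = ((Mx a α z : ℝ) : EReal) := if_pos hz

lemma cpwl_of_not_mem {z : Euc m} (hz : z ∉ cpwlDom d β) :
    cpwlFun a α d β z = ⊤ := if_neg hz

lemma mem_subdiff_iff {z : Euc m} (hz : z ∈ cpwlDom d β) {v : Euc m} :
    v ∈ subdiff (cpwlFun a α d β) z ↔
      ∀ z' ∈ cpwlDom d β, Mx a α z + ⟪v, z' - z⟫ ≤ Mx a α z' := by
  constructor
  · intro h z' hz'
    have h2 := h z'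
    rw [cpwl_of_mem a α d β hz, cpwl_of_mem a α d β hz', ← EReal.coe_add] at h2
    exact_mod_cast h2
  · intro h z'
    by_cases hz' : z' ∈ cpwlDom d β
    · rw [cpwl_of_mem a α d β hz, cpwl_of_mem a α d β hz', ← EReal.coe_add]
      exact_mod_cast h z' hz'
    · rw [cpwl_of_not_mem a α d β hz']
      exact le_top

lemma mem_dom_of_subdiff (hdom : (cpwlDom d β).Nonempty) {z v : Euc m}
    (hv : v ∈ subdiff (cpwlFun a α d β) z) : z ∈ cpwlDom d β := by
  by_contra hz
  obtain ⟨z₀, hz₀⟩ := hdom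
  have h2 := hv z₀
  rw [cpwl_of_not_mem a α d β hz, cpwl_of_mem a α d β hz₀, EReal.top_add_coe] at h2
  exact (EReal.coe_ne_top _) (top_le_iff.mp h2)

lemma subdiff_mono {z₁ z₂ v₁ v₂ : Euc m} (h₁ : z₁ ∈ cpwlDom d β) (h₂ : z₂ ∈ cpwlDom d β)
    (hv₁ : v₁ ∈ subdiff (cpwlFun a α d β) z₁) (hv₂ : v₂ ∈ subdiff (cpwlFun a α d β) z₂) :
    0 ≤ ⟪v₁ - v₂, z₁ - z₂⟫ := by
  have A := (mem_subdiff_iff a α d β h₁).1 hv₁ z₂ h₂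
  have B := (mem_subdiff_iff a α d β h₂).1 hv₂ z₁ h₁
  have e1 : ⟪v₁ - v₂, z₁ - z₂⟫ = ⟪v₁, z₁ - z₂⟫ - ⟪v₂, z₁ - z₂⟫ := inner_sub_left _ _ _
  have e2 : ⟪v₁, z₂ - z₁⟫ = -⟪v₁, z₁ - z₂⟫ := by
    rw [show z₂ - z₁ = -(z₁ - z₂) by abel, inner_neg_right]
  linarith

lemma mem_Kact_iff {z : Euc m} (hz : z ∈ cpwlDom d β) {i : Fin l} :
    i ∈ Kact a α d β z ↔ Mx a α z = ⟪a i, z⟫ - α i := by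
  unfold Kact
  rw [Set.mem_setOf_eq, cpwl_of_mem a α d β hz]
  exact_mod_cast Iff.rfl

lemma a_mem_subdiff {zb : Euc m} (hzb : zb ∈ cpwlDom d β) {i : Fin l}
    (hi : i ∈ Kact a α d β zb) : a i ∈ subdiff (cpwlFun a α d β) zb := by
  rw [mem_subdiff_iff a α d β hzb]
  intro z' hz'
  have h1 : Mx a α zb = ⟪a i, zb⟫ - α i := (mem_Kact_iff a α d β hzb).1 hi
  have h2 : ⟪a i, z'⟫ - α i ≤ Mx a α z' := Mx_le a α i z'
  have h3 : ⟪a i, z' - zb⟫ = ⟪a i, z'⟫ - ⟪a i, zb⟫ := inner_sub_right _ _ _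
  linarith

lemma add_d_mem_subdiff {zb : Euc m} (hzb : zb ∈ cpwlDom d β) {v : Euc m}
    (hv : v ∈ subdiff (cpwlFun a α d β) zb) {k : Fin p} (hk : k ∈ Iact d β zb) :
    v + d k ∈ subdiff (cpwlFun a α d β) zb := by
  rw [mem_subdiff_iff a α d β hzb] at hv ⊢
  intro z' hz'
  have h1 := hv z' hz'
  have h2 : ⟪d k, z'⟫ ≤ β k := hz' k
  have h3 : ⟪d k, zb⟫ = β k := hk
  have e1 : ⟪v + d k, z' - zb⟫ = ⟪v, z' - zb⟫ + ⟪d k, z' - zb⟫ := inner_add_left _ _ _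
  have e2 : ⟪d k, z' - zb⟫ = ⟪d k, z'⟫ - ⟪d k, zb⟫ := inner_sub_right _ _ _
  linarith

lemma comb_mem_subdiff {zb : Euc m} (hzb : zb ∈ cpwlDom d β) {v₁ v₂ : Euc m}
    (h1 : v₁ ∈ subdiff (cpwlFun a α d β) zb) (h2 : v₂ ∈ subdiff (cpwlFun a α d β) zb)
    {t₁ t₂ : ℝ} (ht₁ : 0 ≤ t₁) (ht₂ : 0 ≤ t₂) (hsum : t₁ + t₂ = 1) :
    t₁ • v₁ + t₂ • v₂ ∈ subdiff (cpwlFun a α d β) zb := by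
  rw [mem_subdiff_iff a α d β hzb] at h1 h2 ⊢
  intro z' hz'
  have A := h1 z' hz'
  have B := h2 z' hz'
  have e1 : ⟪t₁ • v₁ + t₂ • v₂, z' - zb⟫ = t₁ * ⟪v₁, z' - zb⟫ + t₂ * ⟪v₂, z' - zb⟫ := by
    rw [inner_add_left, real_inner_smul_left, real_inner_smul_left]
  have A' := mul_le_mul_of_nonneg_left A ht₁
  have B' := mul_le_mul_of_nonneg_left B ht₂
  have hs1 : t₁ * Mx a α zb + t₂ * Mx a α zb = Mx a α zb := by rw [← add_mul, hsum, one_mul]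
  have hs2 : t₁ * Mx a α z' + t₂ * Mx a α z' = Mx a α z' := by rw [← add_mul, hsum, one_mul]
  have A'' : t₁ * Mx a α zb + t₁ * ⟪v₁, z' - zb⟫ ≤ t₁ * Mx a α z' := by
    calc t₁ * Mx a α zb + t₁ * ⟪v₁, z' - zb⟫ = t₁ * (Mx a α zb + ⟪v₁, z' - zb⟫) := by ring
    _ ≤ t₁ * Mx a α z' := A'
  have B'' : t₂ * Mx a α zb + t₂ * ⟪v₂, z' - zb⟫ ≤ t₂ * Mx a α z' := by
    calc t₂ * Mx a α zb + t₂ * ⟪v₂, z' - zb⟫ = t₂ * (Mx a α zb + ⟪v₂, z' - zb⟫) := by ring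
    _ ≤ t₂ * Mx a α z' := B'
  linarith

end SosdAux
set_option linter.unusedSectionVars false
namespace SosdAux

variable {F G : Type*} [NormedAddCommGroup F] [InnerProductSpace ℝ F]
  [NormedAddCommGroup G] [InnerProductSpace ℝ G]

lemma pl2_fst (x : F) (y : G) : ((WithLp.equiv 2 (F × G)) (pl2 x y)).1 = x := rfl
lemma pl2_snd (x : F) (y : G) : ((WithLp.equiv 2 (F × G)) (pl2 x y)).2 = y := rfl

lemma pl2_sub (x y : F) (u v : G) : pl2 x u - pl2 y v = pl2 (x - y) (u - v) := rfl

lemma pl2_eta (q : WithLp 2 (F × G)) :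
    pl2 ((WithLp.equiv 2 (F × G)) q).1 ((WithLp.equiv 2 (F × G)) q).2 = q := rfl

lemma pl2_inner (x y : F) (u v : G) : ⟪pl2 x u, pl2 y v⟫ = ⟪x, y⟫ + ⟪u, v⟫ :=
  WithLp.prod_inner_apply _ _

lemma pl2_norm_sq (x : F) (u : G) : ‖pl2 x u‖ ^ 2 = ‖x‖ ^ 2 + ‖u‖ ^ 2 :=
  WithLp.prod_norm_sq_eq_of_L2 _

lemma pl2_norm_left (x : F) : ‖pl2 x (0 : G)‖ = ‖x‖ := by
  have h := pl2_norm_sq x (0 : G)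
  rw [norm_zero] at h
  nlinarith [norm_nonneg (pl2 x (0 : G)), norm_nonneg x]

lemma pl2_norm_right (u : G) : ‖pl2 (0 : F) u‖ = ‖u‖ := by
  have h := pl2_norm_sq (0 : F) u
  rw [norm_zero] at h
  nlinarith [norm_nonneg (pl2 (0 : F) u), norm_nonneg u]

lemma fst_norm_le (q : WithLp 2 (F × G)) : ‖((WithLp.equiv 2 (F × G)) q).1‖ ≤ ‖q‖ := by
  have h := pl2_norm_sq ((WithLp.equiv 2 (F × G)) q).1 ((WithLp.equiv 2 (F × G)) q).2
  rw [pl2_eta] at h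
  nlinarith [norm_nonneg q, norm_nonneg ((WithLp.equiv 2 (F × G)) q).1,
    norm_nonneg ((WithLp.equiv 2 (F × G)) q).2]

end SosdAux
namespace SosdAux

variable {m l p : ℕ} (a : Fin l → Euc m) (α : Fin l → ℝ) (d : Fin p → Euc m) (β : Fin p → ℝ)

/-- The graph of the subdifferential mapping, as a subset of the `ℓ²` product. -/
def Gph : Set (WithLp 2 (Euc m × Euc m)) :=
  {q : WithLp 2 (Euc m × Euc m) |
    ((WithLp.equiv 2 (Euc m × Euc m)) q).2 ∈ subdiff (cpwlFun a α d β)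
      ((WithLp.equiv 2 (Euc m × Euc m)) q).1}

lemma frechet_of_wiggle (hdom : (cpwlDom d β).Nonempty) {zb : Euc m} (hzb : zb ∈ cpwlDom d β)
    {vh w : Euc m} (hvh : vh ∈ subdiff (cpwlFun a α d β) zb) {τ : ℝ} (hτ : 0 < τ)
    (hwig : vh + τ • w ∈ subdiff (cpwlFun a α d β) zb) :
    pl2 w 0 ∈ frechetNormal (Gph a α d β) (pl2 zb vh) := by
  set x : WithLp 2 (Euc m × Euc m) := pl2 zb vh with hx
  set W : WithLp 2 (Euc m × Euc m) := pl2 w 0 with hW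
  set f : WithLp 2 (Euc m × Euc m) → ℝ := fun y => ⟪W, y - x⟫ / ‖y - x‖ with hf
  have hxG : x ∈ Gph a α d β := hvh
  have hne : (𝓝[Gph a α d β] x).NeBot :=
    mem_closure_iff_nhdsWithin_neBot.mp (subset_closure hxG)
  -- pointwise lower bound
  have key1 : ∀ y, -‖W‖ ≤ f y := by
    intro y
    by_cases hy : y = x
    · simp [hf, hy, norm_nonneg]
    · have hn : 0 < ‖y - x‖ := by
        rw [norm_pos_iff]; exact sub_ne_zero_of_ne hy
      rw [hf]
      rw [le_div_iff₀ hn]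
      have := abs_real_inner_le_norm W (y - x)
      have h2 : -(‖W‖ * ‖y - x‖) ≤ ⟪W, y - x⟫ := neg_le_of_abs_le this
      linarith
  -- the eventual bound
  have key2 : ∀ δ : ℝ, 0 < δ → ∀ᶠ y in 𝓝[Gph a α d β] x, f y ≤ δ := by
    intro δ hδ
    rw [eventually_nhdsWithin_iff, Metric.eventually_nhds_iff]
    refine ⟨2 * τ * δ, by positivity, fun y hyd hyG => ?_⟩
    by_cases hy : y = x
    · simp [hf, hy]; positivity
    · have hn : 0 < ‖y - x‖ := by rw [norm_pos_iff]; exact sub_ne_zero_of_ne hy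
      set z := ((WithLp.equiv 2 (Euc m × Euc m)) y).1 with hz
      set v := ((WithLp.equiv 2 (Euc m × Euc m)) y).2 with hv
      have hvz : v ∈ subdiff (cpwlFun a α d β) z := hyG
      have hzdom : z ∈ cpwlDom d β := mem_dom_of_subdiff a α d β hdom hvz
      have hmono := subdiff_mono a α d β hzdom hzb hvz hwig
      -- ⟪v - (vh + τ w), z - zb⟫ ≥ 0
      have e0 : ⟪v - (vh + τ • w), z - zb⟫
          = ⟪v - vh, z - zb⟫ - τ * ⟪w, z - zb⟫ := by
        rw [show v - (vh + τ • w) = (v - vh) - τ • w by abel, inner_sub_left,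
          real_inner_smul_left]
      have h1 : τ * ⟪w, z - zb⟫ ≤ ⟪v - vh, z - zb⟫ := by
        rw [e0] at hmono; linarith
      have h2 : ⟪v - vh, z - zb⟫ ≤ ‖v - vh‖ * ‖z - zb‖ := real_inner_le_norm _ _
      have hsub : y - x = pl2 (z - zb) (v - vh) := by
        rw [hx, hz, hv, ← pl2_sub, pl2_eta]
      have hnum : ⟪W, y - x⟫ = ⟪w, z - zb⟫ := by
        rw [hsub, hW, pl2_inner, inner_zero_left, add_zero]
      have hnsq : ‖y - x‖ ^ 2 = ‖z - zb‖ ^ 2 + ‖v - vh‖ ^ 2 := by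
        rw [hsub, pl2_norm_sq]
      have hd : ‖y - x‖ < 2 * τ * δ := by rwa [dist_eq_norm] at hyd
      rw [hf, div_le_iff₀ hn, hnum]
      nlinarith [sq_nonneg (‖z - zb‖ - ‖v - vh‖), norm_nonneg (z - zb), norm_nonneg (v - vh)]
  -- conclude limsup ≤ 0
  show Filter.limsup f (𝓝[Gph a α d β] x) ≤ 0
  rw [Filter.limsup_eq]
  have hbdd : BddBelow {a' : ℝ | ∀ᶠ y in 𝓝[Gph a α d β] x, f y ≤ a'} := by
    refine ⟨-‖W‖, fun a' ha' => ?_⟩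
    have ha'' : ∀ᶠ y in 𝓝[Gph a α d β] x, f y ≤ a' := ha'
    obtain ⟨y, hy⟩ := ha''.exists
    exact le_trans (key1 y) hy
  refine le_of_forall_pos_le_add fun δ hδ => ?_
  rw [zero_add]
  exact csInf_le hbdd (key2 δ hδ)

end SosdAux
namespace SosdAux

variable {m l p : ℕ} (a : Fin l → Euc m) (α : Fin l → ℝ) (d : Fin p → Euc m) (β : Fin p → ℝ)

lemma lower_mem (hdom : (cpwlDom d β).Nonempty) {zb : Euc m} (hzb : zb ∈ cpwlDom d β)
    {vb : Euc m} (hvb : vb ∈ subdiff (cpwlFun a α d β) zb)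
    {u₁ u₂ : Euc m} (h₁ : u₁ ∈ subdiff (cpwlFun a α d β) zb)
    (h₂ : u₂ ∈ subdiff (cpwlFun a α d β) zb) {t : ℝ} (ht : 0 < t) {w : Euc m}
    (hw : w = t • (u₁ - u₂)) :
    pl2 w (-(0 : Euc m)) ∈ limitingNormal (Gph a α d β) (pl2 zb vb) := by
  set S := subdiff (cpwlFun a α d β) zb with hS
  set vh : Euc m := (1/2 : ℝ) • u₁ + (1/2 : ℝ) • u₂ with hvh
  have hvhS : vh ∈ S := comb_mem_subdiff a α d β hzb h₁ h₂ (by norm_num) (by norm_num) (by norm_num)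
  have hkey : ∀ k : ℕ, (vb + (1/(k+1 : ℝ)) • (vh - vb)) ∈ S ∧
      (vb + (1/(k+1 : ℝ)) • (vh - vb)) + ((1/(k+1 : ℝ)) * (1/(2*t))) • w ∈ S := by
    intro k
    set μ : ℝ := 1/(k+1 : ℝ) with hμ
    have hμ0 : 0 < μ := by positivity
    have hμ1 : μ ≤ 1 := by
      rw [hμ, div_le_one (by positivity)]
      linarith [Nat.cast_nonneg (α := ℝ) k]
    constructor
    · have e : vb + μ • (vh - vb) = (1 - μ) • vb + μ • vh := by
        rw [sub_smul, one_smul, smul_sub]; abel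
      rw [e]
      exact comb_mem_subdiff a α d β hzb hvb hvhS (by linarith) hμ0.le (by ring)
    · have e2 : (μ * (1/(2*t))) • w = (μ/2) • u₁ - (μ/2) • u₂ := by
        rw [hw, smul_smul, show μ * (1/(2*t)) * t = μ/2 by field_simp, smul_sub]
      have e : (vb + μ • (vh - vb)) + (μ * (1/(2*t))) • w = (1 - μ) • vb + μ • u₁ := by
        rw [e2, hvh]
        module
      rw [e]
      exact comb_mem_subdiff a α d β hzb hvb h₁ (by linarith) hμ0.le (by ring)
  refine ⟨fun k => pl2 zb (vb + (1/(k+1 : ℝ)) • (vh - vb)), fun _ => pl2 w 0,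
    fun k => (hkey k).1, ?_, ?_, ?_⟩
  · rw [tendsto_iff_norm_sub_tendsto_zero]
    have he : ∀ k : ℕ, ‖pl2 zb (vb + (1/(k+1 : ℝ)) • (vh - vb)) - pl2 zb vb‖
        = (1/(k+1 : ℝ)) * ‖vh - vb‖ := by
      intro k
      rw [pl2_sub, sub_self, add_sub_cancel_left, pl2_norm_right, norm_smul,
        Real.norm_eq_abs, abs_of_pos (show (0:ℝ) < 1/(k+1 : ℝ) by positivity)]
    have ht0 : Filter.Tendsto (fun k : ℕ => (1/(k+1 : ℝ)) * ‖vh - vb‖) Filter.atTop (𝓝 0) := by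
      have := tendsto_one_div_add_atTop_nhds_zero_nat.mul_const ‖vh - vb‖
      rwa [zero_mul] at this
    exact ht0.congr (fun k => (he k).symm)
  · have : pl2 w (-(0 : Euc m)) = pl2 w 0 := by rw [neg_zero]
    rw [this]
    exact tendsto_const_nhds
  · intro k
    exact frechet_of_wiggle a α d β hdom hzb (hkey k).1
      (show 0 < (1/(k+1 : ℝ)) * (1/(2*t)) by positivity) (hkey k).2

end SosdAux
namespace SosdAux

variable {m l p : ℕ} (a : Fin l → Euc m) (α : Fin l → ℝ) (d : Fin p → Euc m) (β : Fin p → ℝ)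

lemma upper_inner_eq_zero (hl : 0 < l) (hdom : (cpwlDom d β).Nonempty) {zb : Euc m}
    (hzb : zb ∈ cpwlDom d β) {vb : Euc m} (hvb : vb ∈ subdiff (cpwlFun a α d β) zb)
    {c : Euc m}
    (hcK : ∀ i ∈ Kact a α d β zb, ∀ j ∈ Kact a α d β zb, ⟪a i - a j, c⟫ = 0)
    (hcI : ∀ i ∈ Iact d β zb, ⟪d i, c⟫ = 0)
    {w : Euc m} (hw : pl2 w (-(0 : Euc m)) ∈ limitingNormal (Gph a α d β) (pl2 zb vb)) :
    ⟪c, w⟫ = 0 := by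
  classical
  by_cases hc0 : c = 0
  · simp [hc0]
  have hcn : 0 < ‖c‖ := norm_pos_iff.mpr hc0
  haveI : Nonempty (Fin l) := ⟨⟨0, hl⟩⟩
  -- the active index i₀ and common slope s
  obtain ⟨i₀, hi₀⟩ := exists_eq_ciSup_of_finite (f := fun i => ⟪a i, zb⟫ - α i)
  have hi₀K : i₀ ∈ Kact a α d β zb := (mem_Kact_iff a α d β hzb).2 hi₀.symm
  set s : ℝ := ⟪a i₀, c⟫ with hs_def
  have hs : ∀ i ∈ Kact a α d β zb, ⟪a i, c⟫ = s := by
    intro i hi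
    have := hcK i hi i₀ hi₀K
    rw [inner_sub_left] at this
    linarith
  -- the active finset
  set KF : Finset (Fin l) := Finset.univ.filter (fun i => i ∈ Kact a α d β zb) with hKF_def
  have hKF : KF.Nonempty := ⟨i₀, Finset.mem_filter.mpr ⟨Finset.mem_univ _, hi₀K⟩⟩
  set MK : Euc m → ℝ := fun z => KF.sup' hKF (fun i => ⟪a i, z⟫ - α i) with hMK_def
  -- the good open neighborhood
  set Wo : Set (Euc m) :=
    {z | ∀ i, i ∉ Kact a α d β zb → ⟪a i, z⟫ - α i < MK z} with hWo_def
  set V : Set (Euc m) := {z | ∀ i, i ∉ Iact d β zb → ⟪d i, z⟫ < β i} with hV_def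
  have haff : ∀ i : Fin l, Continuous (fun z : Euc m => ⟪a i, z⟫ - α i) :=
    fun i => (continuous_const.inner continuous_id).sub continuous_const
  have hWoOpen : IsOpen Wo := by
    have : Wo = ⋂ i ∈ Finset.univ.filter (fun i => i ∉ Kact a α d β zb),
        ⋃ j ∈ KF, {z : Euc m | ⟪a i, z⟫ - α i < ⟪a j, z⟫ - α j} := by
      ext z
      simp only [hWo_def, Set.mem_setOf_eq, Set.mem_iInter, Set.mem_iUnion,
        Finset.mem_filter, Finset.mem_univ, true_and]
      constructor
      · intro h i hi
        obtain ⟨j, hj, hlt⟩ := (Finset.lt_sup'_iff hKF).1 (h i hi)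
        exact ⟨j, hj, hlt⟩
      · intro h i hi
        obtain ⟨j, hj, hlt⟩ := h i hi
        exact (Finset.lt_sup'_iff hKF).2 ⟨j, hj, hlt⟩
    rw [this]
    exact isOpen_biInter_finset fun i _ =>
      isOpen_biUnion fun j _ => isOpen_lt (haff i) (haff j)
  have hVOpen : IsOpen V := by
    have : V = ⋂ i ∈ Finset.univ.filter (fun i => i ∉ Iact d β zb),
        {z : Euc m | ⟪d i, z⟫ < β i} := by
      ext z
      simp only [hV_def, Set.mem_setOf_eq, Set.mem_iInter, Finset.mem_filter,
        Finset.mem_univ, true_and]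
    rw [this]
    exact isOpen_biInter_finset fun i _ =>
      isOpen_lt (continuous_const.inner continuous_id) continuous_const
  have hMKzb : MK zb = Mx a α zb := by
    refine le_antisymm (Finset.sup'_le _ _ fun j _ => Mx_le a α j zb) ?_
    have h1 : Mx a α zb = ⟪a i₀, zb⟫ - α i₀ := hi₀.symm
    rw [h1]
    exact Finset.le_sup' (f := fun i => ⟪a i, zb⟫ - α i)
      (Finset.mem_filter.mpr ⟨Finset.mem_univ _, hi₀K⟩)
  have hzbWo : zb ∈ Wo := by
    intro i hi
    have h1 : ⟪a i, zb⟫ - α i ≤ Mx a α zb := Mx_le a α i zb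
    have h2 : Mx a α zb ≠ ⟪a i, zb⟫ - α i := fun e => hi ((mem_Kact_iff a α d β hzb).2 e)
    rw [hMKzb]
    exact lt_of_le_of_ne h1 (fun e => h2 e.symm)
  have hzbV : zb ∈ V := by
    intro i hi
    exact lt_of_le_of_ne (hzb i) (fun e => hi e)
  obtain ⟨ε, hε, hball⟩ := Metric.isOpen_iff.1 (hWoOpen.inter hVOpen) zb ⟨hzbWo, hzbV⟩
  -- M agrees with MK on Wo
  have hMx_eq : ∀ z ∈ Wo, Mx a α z = MK z := by
    intro z hz
    refine le_antisymm (ciSup_le fun i => ?_) (Finset.sup'_le _ _ fun j _ => Mx_le a α j z)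
    by_cases hi : i ∈ Kact a α d β zb
    · exact Finset.le_sup' (f := fun j => ⟪a j, z⟫ - α j)
        (Finset.mem_filter.mpr ⟨Finset.mem_univ _, hi⟩)
    · exact (hz i hi).le
  -- sup' plus constant
  have hsup_add : ∀ (gz : Fin l → ℝ) (C : ℝ),
      KF.sup' hKF (fun i => gz i + C) = KF.sup' hKF gz + C := by
    intro gz C
    refine le_antisymm (Finset.sup'_le _ _ fun i hi => add_le_add_left (Finset.le_sup' _ hi) C) ?_
    have : KF.sup' hKF gz ≤ KF.sup' hKF (fun i => gz i + C) - C :=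
      Finset.sup'_le _ _ fun i hi => by
        have := Finset.le_sup' (fun i => gz i + C) hi
        linarith
    linarith
  -- slope along c
  have hslope : ∀ z ∈ Metric.ball zb ε, ∀ t : ℝ, z + t • c ∈ Metric.ball zb ε →
      Mx a α (z + t • c) = Mx a α z + t * s := by
    intro z hz t hzt
    have h1 : Mx a α (z + t • c) = MK (z + t • c) := hMx_eq _ (hball hzt).1
    have h2 : MK (z + t • c) = KF.sup' hKF (fun i => (⟪a i, z⟫ - α i) + t * s) := by
      refine Finset.sup'_congr hKF rfl fun i hi => ?_
      have hiK : i ∈ Kact a α d β zb := (Finset.mem_filter.mp hi).2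
      rw [inner_add_right, real_inner_smul_right, hs i hiK]
      ring
    rw [h1, h2, hsup_add]
    rw [show (KF.sup' hKF fun i => ⟪a i, z⟫ - α i) = MK z from rfl, ← hMx_eq z (hball hz).1]
  -- staying in the domain
  have hdomstep : ∀ z ∈ Metric.ball zb ε, z ∈ cpwlDom d β → ∀ t : ℝ,
      z + t • c ∈ Metric.ball zb ε → z + t • c ∈ cpwlDom d β := by
    intro z _ hzdom t hzt i
    by_cases hi : i ∈ Iact d β zb
    · rw [inner_add_right, real_inner_smul_right, hcI i hi, mul_zero, add_zero]
      exact hzdom i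
    · exact ((hball hzt).2 i hi).le
  -- unpack the limiting normal
  obtain ⟨xs, vs, hmemG, hxs, hvs, hfre⟩ := hw
  set zc : ℕ → Euc m := fun k => ((WithLp.equiv 2 (Euc m × Euc m)) (xs k)).1 with hzc
  set vc : ℕ → Euc m := fun k => ((WithLp.equiv 2 (Euc m × Euc m)) (xs k)).2 with hvc
  set wc : ℕ → Euc m := fun k => ((WithLp.equiv 2 (Euc m × Euc m)) (vs k)).1 with hwc
  set t₀ : ℝ := ε / (4 * ‖c‖) with ht₀_def
  have ht₀ : 0 < t₀ := by positivity
  -- main step : the inner product vanishes along the sequence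
  have hzero : ∀ k : ℕ, ‖zc k - zb‖ < ε / 2 → ⟪c, wc k⟫ = 0 := by
    intro k hk
    have hvk : vc k ∈ subdiff (cpwlFun a α d β) (zc k) := hmemG k
    have hzdom : zc k ∈ cpwlDom d β := mem_dom_of_subdiff a α d β hdom hvk
    have hzball : zc k ∈ Metric.ball zb ε := by
      rw [Metric.mem_ball, dist_eq_norm]
      linarith
    have hshift : ∀ t : ℝ, |t| ≤ t₀ → zc k + t • c ∈ Metric.ball zb ε := by
      intro t h
      rw [Metric.mem_ball, dist_eq_norm]
      have e : zc k + t • c - zb = (zc k - zb) + t • c := by abel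
      rw [e]
      have h2 : ‖(zc k - zb) + t • c‖ ≤ ‖zc k - zb‖ + ‖t • c‖ := norm_add_le _ _
      have h3 : ‖t • c‖ = |t| * ‖c‖ := by rw [norm_smul, Real.norm_eq_abs]
      have h4 : |t| * ‖c‖ ≤ t₀ * ‖c‖ := mul_le_mul_of_nonneg_right h (norm_nonneg c)
      have h5 : t₀ * ‖c‖ = ε / 4 := by
        rw [ht₀_def]; field_simp
      linarith
    have habs : |t₀| ≤ t₀ := by rw [abs_of_pos ht₀]
    have habs' : |(-t₀)| ≤ t₀ := by rw [abs_neg, abs_of_pos ht₀]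
    -- step 1 : ⟪vc k, c⟫ = s
    have hvcs : ⟪vc k, c⟫ = s := by
      have hA := (mem_subdiff_iff a α d β hzdom).1 hvk (zc k + t₀ • c)
        (hdomstep _ hzball hzdom _ (hshift t₀ habs))
      have hB := (mem_subdiff_iff a α d β hzdom).1 hvk (zc k + (-t₀) • c)
        (hdomstep _ hzball hzdom _ (hshift (-t₀) habs'))
      rw [add_sub_cancel_left, real_inner_smul_right,
        hslope _ hzball t₀ (hshift t₀ habs)] at hA
      rw [add_sub_cancel_left, real_inner_smul_right,
        hslope _ hzball (-t₀) (hshift (-t₀) habs')] at hB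
      have h1 : ⟪vc k, c⟫ ≤ s := by nlinarith
      have h2 : s ≤ ⟪vc k, c⟫ := by nlinarith
      linarith
    -- step 2 : vc k is still a subgradient after shifting along c
    have hsubt : ∀ t : ℝ, |t| ≤ t₀ →
        vc k ∈ subdiff (cpwlFun a α d β) (zc k + t • c) := by
      intro t h
      have hdom' := hdomstep _ hzball hzdom _ (hshift t h)
      rw [mem_subdiff_iff a α d β hdom']
      intro z' hz'
      have hA := (mem_subdiff_iff a α d β hzdom).1 hvk z' hz'
      have e1 : ⟪vc k, z' - (zc k + t • c)⟫
          = ⟪vc k, z' - zc k⟫ - t * ⟪vc k, c⟫ := by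
        rw [show z' - (zc k + t • c) = (z' - zc k) - t • c by abel, inner_sub_right,
          real_inner_smul_right]
      rw [hslope _ hzball t (hshift t h), e1, hvcs]
      linarith
    -- step 3 : the Fréchet normal kills c
    have hfk := hfre k
    have hfk' : Filter.limsup
        (fun y => ⟪vs k, y - xs k⟫ / ‖y - xs k‖) (𝓝[Gph a α d β] (xs k)) ≤ 0 := hfk
    set f : WithLp 2 (Euc m × Euc m) → ℝ :=
      fun y => ⟪vs k, y - xs k⟫ / ‖y - xs k‖ with hf
    have hfbd : ∀ y, f y ≤ ‖vs k‖ := by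
      intro y
      by_cases hy : y = xs k
      · simp [hf, hy, norm_nonneg]
      · have hn : 0 < ‖y - xs k‖ := by rw [norm_pos_iff]; exact sub_ne_zero_of_ne hy
        rw [hf, div_le_iff₀ hn]
        have := abs_real_inner_le_norm (vs k) (y - xs k)
        have h2 := le_of_abs_le this
        exact le_trans h2 (by rfl)
    have hlim : ∀ δ : ℝ, 0 < δ → ⟪wc k, c⟫ / ‖c‖ < δ ∧ -(⟪wc k, c⟫ / ‖c‖) < δ := by
      intro δ hδ
      have hSmem : ∀ᶠ y in 𝓝[Gph a α d β] (xs k), f y ≤ ‖vs k‖ :=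
        Filter.Eventually.of_forall hfbd
      have hSne : {a' : ℝ | ∀ᶠ y in 𝓝[Gph a α d β] (xs k), f y ≤ a'}.Nonempty :=
        ⟨‖vs k‖, hSmem⟩
      have hinf : sInf {a' : ℝ | ∀ᶠ y in 𝓝[Gph a α d β] (xs k), f y ≤ a'} < δ := by
        rw [Filter.limsup_eq] at hfk'
        exact lt_of_le_of_lt hfk' hδ
      obtain ⟨a', ha', ha'δ⟩ := exists_lt_of_csInf_lt hSne hinf
      have ha'' : ∀ᶠ y in 𝓝[Gph a α d β] (xs k), f y ≤ a' := ha'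
      rw [eventually_nhdsWithin_iff, Metric.eventually_nhds_iff] at ha''
      obtain ⟨r, hr, hr2⟩ := ha''
      set tt : ℝ := min t₀ (r / (2 * ‖c‖)) with htt_def
      have htt : 0 < tt := lt_min ht₀ (by positivity)
      have htt₀ : tt ≤ t₀ := min_le_left _ _
      have httr : tt * ‖c‖ < r := by
        have h1 : tt ≤ r / (2 * ‖c‖) := min_le_right _ _
        have h2 : tt * ‖c‖ ≤ (r / (2 * ‖c‖)) * ‖c‖ := mul_le_mul_of_nonneg_right h1 (norm_nonneg c)
        have h3 : (r / (2 * ‖c‖)) * ‖c‖ = r / 2 := by field_simp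
        linarith
      have key : ∀ σ : ℝ, |σ| ≤ t₀ → |σ| * ‖c‖ < r →  σ ≠ 0 →
          (σ * ⟪wc k, c⟫) / (|σ| * ‖c‖) ≤ a' := by
        intro σ hσ hσr hσ0
        set y : WithLp 2 (Euc m × Euc m) := pl2 (zc k + σ • c) (vc k) with hy
        have hyG : y ∈ Gph a α d β := hsubt σ hσ
        have hysub : y - xs k = pl2 (σ • c) 0 := by
          rw [hy, show xs k = pl2 (zc k) (vc k) from (pl2_eta (xs k)).symm, pl2_sub,
            add_sub_cancel_left, sub_self]
        have hynorm : ‖y - xs k‖ = |σ| * ‖c‖ := by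
          rw [hysub, pl2_norm_left, norm_smul, Real.norm_eq_abs]
        have hydist : dist y (xs k) < r := by
          rw [dist_eq_norm, hynorm]; exact hσr
        have hfy := hr2 hydist hyG
        have hnum : ⟪vs k, y - xs k⟫ = σ * ⟪wc k, c⟫ := by
          rw [hysub, show vs k = pl2 (wc k) (((WithLp.equiv 2 (Euc m × Euc m)) (vs k)).2)
            from (pl2_eta (vs k)).symm, pl2_inner, inner_zero_right, add_zero,
            real_inner_smul_right]
        have hfy' : ⟪vs k, y - xs k⟫ / ‖y - xs k‖ ≤ a' := hfy
        rw [hnum, hynorm] at hfy'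
        exact hfy'
      have hp := key tt (by rwa [abs_of_pos htt]) (by rwa [abs_of_pos htt]) (ne_of_gt htt)
      have hq := key (-tt) (by rwa [abs_neg, abs_of_pos htt])
        (by rwa [abs_neg, abs_of_pos htt]) (by simp [ne_of_gt htt])
      rw [abs_of_pos htt] at hp
      rw [abs_neg, abs_of_pos htt] at hq
      have e1 : (tt * ⟪wc k, c⟫) / (tt * ‖c‖) = ⟪wc k, c⟫ / ‖c‖ :=
        mul_div_mul_left _ _ (ne_of_gt htt)
      have e2 : ((-tt) * ⟪wc k, c⟫) / (tt * ‖c‖) = -(⟪wc k, c⟫ / ‖c‖) := by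
        rw [neg_mul, neg_div, e1]
      rw [e1] at hp
      rw [e2] at hq
      exact ⟨lt_of_le_of_lt hp ha'δ, lt_of_le_of_lt hq ha'δ⟩
    have h1 : ⟪wc k, c⟫ / ‖c‖ ≤ 0 :=
      le_of_forall_pos_le_add fun δ hδ => by
        have := (hlim δ hδ).1; linarith
    have h2 : 0 ≤ ⟪wc k, c⟫ / ‖c‖ := by
      by_contra h
      push_neg at h
      have := (hlim (-(⟪wc k, c⟫ / ‖c‖)) (by linarith)).2
      linarith
    have h3 : ⟪wc k, c⟫ / ‖c‖ = 0 := le_antisymm h1 h2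
    have h4 : ⟪wc k, c⟫ = 0 := by
      field_simp at h3
      rwa [mul_zero] at h3
    rw [real_inner_comm]
    exact h4
  -- pass to the limit
  have hconv : Filter.Tendsto (fun k => ⟪pl2 c (0 : Euc m), vs k⟫) Filter.atTop
      (𝓝 ⟪pl2 c (0 : Euc m), pl2 w (-(0 : Euc m))⟫) :=
    tendsto_const_nhds.inner hvs
  have hval : ⟪pl2 c (0 : Euc m), pl2 w (-(0 : Euc m))⟫ = ⟪c, w⟫ := by
    rw [pl2_inner, inner_zero_left, add_zero]
  have hev : (fun k => ⟪pl2 c (0 : Euc m), vs k⟫) =ᶠ[Filter.atTop] (fun _ => (0 : ℝ)) := by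
    have hd2 : ∀ᶠ k in Filter.atTop, dist (xs k) (pl2 zb vb) < ε / 2 := by
      obtain ⟨N, hN⟩ := Metric.tendsto_atTop.mp hxs (ε / 2) (half_pos hε)
      exact Filter.eventually_atTop.2 ⟨N, hN⟩
    refine hd2.mono fun k hk => ?_
    rw [dist_eq_norm] at hk
    show ⟪pl2 c (0 : Euc m), vs k⟫ = 0
    have hsubk : xs k - pl2 zb vb = pl2 (zc k - zb) (vc k - vb) := by
      rw [show xs k = pl2 (zc k) (vc k) from (pl2_eta (xs k)).symm, pl2_sub]
    have h1 : ‖zc k - zb‖ ≤ ‖xs k - pl2 zb vb‖ := by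
      have h2 := fst_norm_le (xs k - pl2 zb vb)
      rwa [hsubk, pl2_fst] at h2
    have hzk : ‖zc k - zb‖ < ε / 2 := lt_of_le_of_lt h1 hk
    have h0 := hzero k hzk
    rw [show vs k = pl2 (wc k) (((WithLp.equiv 2 (Euc m × Euc m)) (vs k)).2)
      from (pl2_eta (vs k)).symm, pl2_inner, inner_zero_left, add_zero]
    exact h0
  have hzero' : Filter.Tendsto (fun k => ⟪pl2 c (0 : Euc m), vs k⟫) Filter.atTop (𝓝 0) :=
    Filter.Tendsto.congr' hev.symm tendsto_const_nhds
  rw [← hval]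
  exact tendsto_nhds_unique hconv hzero'

end SosdAux
namespace SosdAux

variable {m l p : ℕ} (a : Fin l → Euc m) (α : Fin l → ℝ) (d : Fin p → Euc m) (β : Fin p → ℝ)

/-- The cone of scaled differences of subgradients, which is a submodule. -/
def Tsub {zb : Euc m} (hzb : zb ∈ cpwlDom d β) {vb : Euc m}
    (hvb : vb ∈ subdiff (cpwlFun a α d β) zb) : Submodule ℝ (Euc m) where
  carrier := {w | ∃ u₁ ∈ subdiff (cpwlFun a α d β) zb, ∃ u₂ ∈ subdiff (cpwlFun a α d β) zb,
    ∃ t : ℝ, 0 < t ∧ w = t • (u₁ - u₂)}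
  zero_mem' := ⟨vb, hvb, vb, hvb, 1, one_pos, by simp⟩
  add_mem' := by
    rintro x y ⟨u₁, h₁, u₂, h₂, t, ht, rfl⟩ ⟨u₃, h₃, u₄, h₄, r, hr, rfl⟩
    have htr : 0 < t + r := by linarith
    have htr' : t + r ≠ 0 := ne_of_gt htr
    refine ⟨(t/(t+r)) • u₁ + (r/(t+r)) • u₃,
      comb_mem_subdiff a α d β hzb h₁ h₃ (by positivity) (by positivity) (by field_simp),
      (t/(t+r)) • u₂ + (r/(t+r)) • u₄,
      comb_mem_subdiff a α d β hzb h₂ h₄ (by positivity) (by positivity) (by field_simp),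
      t + r, htr, ?_⟩
    have e1 : (t+r) • ((t/(t+r)) • u₁) = t • u₁ := by
      rw [smul_smul]; congr 1; field_simp
    have e2 : (t+r) • ((r/(t+r)) • u₃) = r • u₃ := by
      rw [smul_smul]; congr 1; field_simp
    have e3 : (t+r) • ((t/(t+r)) • u₂) = t • u₂ := by
      rw [smul_smul]; congr 1; field_simp
    have e4 : (t+r) • ((r/(t+r)) • u₄) = r • u₄ := by
      rw [smul_smul]; congr 1; field_simp
    have e : (t+r) • ((t/(t+r)) • u₁ + (r/(t+r)) • u₃ - ((t/(t+r)) • u₂ + (r/(t+r)) • u₄))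
        = t • (u₁ - u₂) + r • (u₃ - u₄) := by
      rw [smul_sub, smul_add, smul_add, e1, e2, e3, e4, smul_sub, smul_sub]
      abel
    exact e.symm
  smul_mem' := by
    rintro r x ⟨u₁, h₁, u₂, h₂, t, ht, rfl⟩
    rcases lt_trichotomy r 0 with hr | hr | hr
    · refine ⟨u₂, h₂, u₁, h₁, (-r) * t, mul_pos (neg_pos.2 hr) ht, ?_⟩
      have e : ((-r) * t) • (u₂ - u₁) = r • (t • (u₁ - u₂)) := by
        rw [smul_smul, smul_sub, smul_sub, show (-r) * t = -(r * t) by ring,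
          neg_smul, neg_smul]
        abel
      exact e.symm
    · subst hr
      rw [zero_smul]
      exact ⟨vb, hvb, vb, hvb, 1, one_pos, by simp⟩
    · exact ⟨u₁, h₁, u₂, h₂, r * t, by positivity, by rw [smul_smul]⟩

end SosdAux

theorem sosd_cpwl_at_zero' {m l p : ℕ} (hl : 0 < l)
    (a : Fin l → Euc m) (α : Fin l → ℝ) (d : Fin p → Euc m) (β : Fin p → ℝ)
    (hdom : (cpwlDom d β).Nonempty) (zb : Euc m) (hzb : zb ∈ cpwlDom d β)
    (vb : Euc m) (hvb : vb ∈ subdiff (cpwlFun a α d β) zb) :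
    sosd (cpwlFun a α d β) zb vb 0 =
      (Submodule.span ℝ
          (Set.image2 (fun i j => a i - a j) (Kact a α d β zb) (Kact a α d β zb)) : Set (Euc m)) +
      (Submodule.span ℝ (d '' Iact d β zb) : Set (Euc m)) := by
  classical
  set S1 : Submodule ℝ (Euc m) := Submodule.span ℝ
    (Set.image2 (fun i j => a i - a j) (Kact a α d β zb) (Kact a α d β zb)) with hS1
  set S2 : Submodule ℝ (Euc m) := Submodule.span ℝ (d '' Iact d β zb) with hS2
  have hsum : (S1 : Set (Euc m)) + (S2 : Set (Euc m)) = ((S1 ⊔ S2 : Submodule ℝ (Euc m)) : Set (Euc m)) :=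
    (Submodule.coe_sup S1 S2).symm
  rw [hsum]
  set L : Submodule ℝ (Euc m) := S1 ⊔ S2 with hLdef
  ext w
  constructor
  · intro hw
    have hw' : pl2 w (-(0 : Euc m)) ∈ limitingNormal (SosdAux.Gph a α d β) (pl2 zb vb) := hw
    rw [SetLike.mem_coe, ← Submodule.orthogonal_orthogonal L, Submodule.mem_orthogonal]
    intro c hc
    refine SosdAux.upper_inner_eq_zero a α d β hl hdom hzb hvb ?_ ?_ hw'
    · intro i hi j hj
      exact hc _ (le_sup_left (α := Submodule ℝ (Euc m)) (a := S1) (b := S2)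
        (Submodule.subset_span (Set.mem_image2_of_mem hi hj)))
    · intro i hi
      exact hc _ (le_sup_right (α := Submodule ℝ (Euc m)) (a := S1) (b := S2)
        (Submodule.subset_span (Set.mem_image_of_mem d hi)))
  · intro hw
    have hLT : L ≤ SosdAux.Tsub a α d β hzb hvb := by
      rw [hLdef]
      refine sup_le ?_ ?_
      · rw [hS1, Submodule.span_le]
        rintro x ⟨i, hi, j, hj, rfl⟩
        exact ⟨a i, SosdAux.a_mem_subdiff a α d β hzb hi,
          a j, SosdAux.a_mem_subdiff a α d β hzb hj, 1, one_pos, (one_smul ℝ _).symm⟩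
      · rw [hS2, Submodule.span_le]
        rintro x ⟨i, hi, rfl⟩
        refine ⟨vb + d i, SosdAux.add_d_mem_subdiff a α d β hzb hvb hi,
          vb, hvb, 1, one_pos, ?_⟩
        rw [one_smul]; abel
    obtain ⟨u₁, h₁, u₂, h₂, t, ht, hweq⟩ := hLT hw
    exact SosdAux.lower_mem a α d β hdom hzb hvb h₁ h₂ ht hweq

/-- The second-order subdifferential of a CPWL function evaluated at `0`:
`∂²θ(zb,vb)(0) = span{a i - a j : i,j ∈ K(zb)} + span{d i : i ∈ I(zb)}`. -/
theorem sosd_cpwl_at_zero {m l p : ℕ} (hl : 0 < l)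
    (a : Fin l → Euc m) (α : Fin l → ℝ) (d : Fin p → Euc m) (β : Fin p → ℝ)
    (hdom : (cpwlDom d β).Nonempty) (zb : Euc m) (hzb : zb ∈ cpwlDom d β)
    (vb : Euc m) (hvb : vb ∈ subdiff (cpwlFun a α d β) zb) :
    sosd (cpwlFun a α d β) zb vb 0 =
      (Submodule.span ℝ
          (Set.image2 (fun i j => a i - a j) (Kact a α d β zb) (Kact a α d β zb)) : Set (Euc m)) +
      (Submodule.span ℝ (d '' Iact d β zb) : Set (Euc m)) := by
  exact sosd_cpwl_at_zero' hl a α d β hdom zb hzb vb hvb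
end
end

section
/- Let θ be a proper convex piecewise linear function on ℝ^m and z̄ ∈ dom θ. Then ∂²θ(z̄,v̄)(0) = S(z̄) for every v̄ ∈ ∂θ(z̄); in particular, the set ∂²θ(z̄,v̄)(0) does not depend on the choice of v̄ ∈ ∂θ(z̄). -/
noncomputable section
open Set Filter Topology Metric
open scoped RealInnerProductSpace Pointwise NNReal Classical

variable {F G : Type*} [NormedAddCommGroup F] [InnerProductSpace ℝ F]
  [NormedAddCommGroup G] [InnerProductSpace ℝ G]

namespace MyCone

lemma zero_mem (s : Set F) : (0 : F) ∈ coneHull s :=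
  ⟨0, (fun i => 0), (fun i => 0), fun i => le_refl _, fun i => i.elim0, by simp⟩

lemma smul_single_mem (s : Set F) {x : F} (hx : x ∈ s) {t : ℝ} (ht : 0 ≤ t) :
    t • x ∈ coneHull s :=
  ⟨1, fun _ => t, fun _ => x, fun _ => ht, fun _ => hx, by simp⟩

lemma add_mem {s : Set F} {x y : F} (hx : x ∈ coneHull s) (hy : y ∈ coneHull s) :
    x + y ∈ coneHull s := by
  obtain ⟨n1, c1, y1, hc1, hy1, rfl⟩ := hx
  obtain ⟨n2, c2, y2, hc2, hy2, rfl⟩ := hy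
  refine ⟨n1 + n2, Fin.append c1 c2, Fin.append y1 y2, ?_, ?_, ?_⟩
  · intro i
    refine Fin.addCases (fun j => ?_) (fun j => ?_) i <;>
      simp [Fin.append_left, Fin.append_right, hc1 _, hc2 _]
  · intro i
    refine Fin.addCases (fun j => ?_) (fun j => ?_) i <;>
      simp [Fin.append_left, Fin.append_right, hy1 _, hy2 _]
  · rw [Fin.sum_univ_add]
    congr 1 <;> { apply Finset.sum_congr rfl; intro j _; simp [Fin.append_left, Fin.append_right] }

lemma smul_mem {s : Set F} {x : F} (hx : x ∈ coneHull s) {t : ℝ} (ht : 0 ≤ t) :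
    t • x ∈ coneHull s := by
  obtain ⟨n, c, y, hc, hy, rfl⟩ := hx
  exact ⟨n, fun i => t * c i, y, fun i => mul_nonneg ht (hc i), hy, by
    simp [Finset.smul_sum, smul_smul]⟩

lemma convex (s : Set F) : Convex ℝ (coneHull s) := by
  intro x hx y hy tx ty htx hty _
  exact add_mem (smul_mem hx htx) (smul_mem hy hty)

end MyCone


namespace MyCPWL

variable {m l p : ℕ} (a : Fin l → Euc m) (α : Fin l → ℝ) (d : Fin p → Euc m) (β : Fin p → ℝ)

/-- finite max -/
def fm (z : Euc m) : ℝ := ⨆ i, (⟪a i, z⟫ - α i)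

variable {a α d β}

lemma fm_le (i : Fin l) (z : Euc m) : ⟪a i, z⟫ - α i ≤ fm a α z :=
  le_ciSup (Set.Finite.bddAbove (Set.finite_range (fun i : Fin l => ⟪a i, z⟫ - α i))) i

lemma exists_fm_eq (hl : 0 < l) (z : Euc m) : ∃ i, fm a α z = ⟪a i, z⟫ - α i := by
  haveI : Nonempty (Fin l) := Fin.pos_iff_nonempty.mp hl
  obtain ⟨i, hi⟩ := Finite.exists_max (fun i : Fin l => ⟪a i, z⟫ - α i)
  exact ⟨i, le_antisymm (ciSup_le hi) (fm_le i z)⟩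

lemma theta_eq {z : Euc m} (hz : z ∈ cpwlDom d β) :
    cpwlFun a α d β z = ((fm a α z : ℝ) : EReal) := if_pos hz

lemma theta_eq_top {z : Euc m} (hz : z ∉ cpwlDom d β) :
    cpwlFun a α d β z = ⊤ := if_neg hz

lemma mem_subdiff_iff {z : Euc m} (hz : z ∈ cpwlDom d β) (v : Euc m) :
    v ∈ subdiff (cpwlFun a α d β) z ↔
      ∀ z' ∈ cpwlDom d β, fm a α z + ⟪v, z' - z⟫ ≤ fm a α z' := by
  constructor
  · intro h z' hz'
    have := h z'
    rw [theta_eq hz, theta_eq hz', ← EReal.coe_add] at this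
    exact_mod_cast this
  · intro h z'
    by_cases hz' : z' ∈ cpwlDom d β
    · rw [theta_eq hz, theta_eq hz', ← EReal.coe_add]
      exact_mod_cast h z' hz'
    · rw [theta_eq_top hz']; exact le_top

lemma mem_dom_of_subdiff {z v : Euc m} (hdom : (cpwlDom d β).Nonempty)
    (hv : v ∈ subdiff (cpwlFun a α d β) z) : z ∈ cpwlDom d β := by
  by_contra hz
  obtain ⟨z₀, hz₀⟩ := hdom
  have := hv z₀
  rw [theta_eq_top hz, theta_eq hz₀, EReal.top_add_of_ne_bot (by simp)] at this
  exact absurd this (by simp)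

/-- monotonicity of the subdifferential -/
lemma subdiff_mono {z z' u v : Euc m} (hz : z ∈ cpwlDom d β) (hz' : z' ∈ cpwlDom d β)
    (hu : u ∈ subdiff (cpwlFun a α d β) z) (hv : v ∈ subdiff (cpwlFun a α d β) z') :
    0 ≤ ⟪u - v, z - z'⟫ := by
  have h1 := (mem_subdiff_iff hz u).mp hu z' hz'
  have h2 := (mem_subdiff_iff hz' v).mp hv z hz
  have : ⟪u, z' - z⟫ + ⟪v, z - z'⟫ ≤ 0 := by linarith
  have e : ⟪u - v, z - z'⟫ = -(⟪u, z' - z⟫ + ⟪v, z - z'⟫) := by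
    rw [inner_sub_left]
    have : ⟪u, z' - z⟫ = -⟪u, z - z'⟫ := by rw [← inner_neg_right]; congr 1; abel
    rw [this]; ring
  rw [e]; linarith

lemma subdiff_convexchar {z : Euc m} (hz : z ∈ cpwlDom d β) {v w : Euc m} {t : ℝ}
    (hv : v ∈ subdiff (cpwlFun a α d β) z) (hw : w ∈ subdiff (cpwlFun a α d β) z)
    (ht0 : 0 ≤ t) (ht1 : t ≤ 1) :
    t • v + (1 - t) • w ∈ subdiff (cpwlFun a α d β) z := by
  rw [mem_subdiff_iff hz] at hv hw ⊢
  intro z' hz'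
  have h1 := hv z' hz'
  have h2 := hw z' hz'
  have : ⟪t • v + (1 - t) • w, z' - z⟫ = t * ⟪v, z' - z⟫ + (1 - t) * ⟪w, z' - z⟫ := by
    rw [inner_add_left, real_inner_smul_left, real_inner_smul_left]
  rw [this]
  nlinarith

end MyCPWL

namespace MyCPWL
variable {m l p : ℕ} {a : Fin l → Euc m} {α : Fin l → ℝ} {d : Fin p → Euc m} {β : Fin p → ℝ}

variable (a α d β) in
def cellC (K : Set (Fin l)) (I : Set (Fin p)) : Set (Euc m) :=
  {z | z ∈ cpwlDom d β ∧ (∀ i ∈ I, ⟪d i, z⟫ = β i) ∧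
    ∀ k ∈ K, ∀ j, ⟪a j, z⟫ - α j ≤ ⟪a k, z⟫ - α k}

variable (a d) in
def Eraw (K : Set (Fin l)) (I : Set (Fin p)) : Set (Euc m) :=
  convexHull ℝ (a '' K) + coneHull (d '' I)

lemma fm_eq_of_active {K I z} (hz : z ∈ cellC a α d β K I) {k : Fin l} (hk : k ∈ K) :
    fm a α z = ⟪a k, z⟫ - α k := by
  haveI : Nonempty (Fin l) := ⟨k⟩
  exact le_antisymm (ciSup_le (hz.2.2 k hk)) (fm_le k z)

lemma Eraw_subset_subdiff {K I z} (hz : z ∈ cellC a α d β K I) :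
    Eraw a d K I ⊆ subdiff (cpwlFun a α d β) z := by
  rintro u ⟨c, hc, s, hs, rfl⟩
  rw [mem_subdiff_iff hz.1]
  intro z' hz'
  have hcpart : ⟪c, z' - z⟫ ≤ fm a α z' - fm a α z := by
    have hconv : Convex ℝ {c : Euc m | ⟪c, z' - z⟫ ≤ fm a α z' - fm a α z} := by
      intro x hx y hy tx ty htx hty htxy
      simp only [Set.mem_setOf_eq, inner_add_left, real_inner_smul_left] at *
      have h1 := mul_le_mul_of_nonneg_left hx htx
      have h2 := mul_le_mul_of_nonneg_left hy hty
      have h3 : tx * (fm a α z' - fm a α z) + ty * (fm a α z' - fm a α z)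
          = fm a α z' - fm a α z := by rw [← add_mul, htxy, one_mul]
      linarith
    have hbase : a '' K ⊆ {c : Euc m | ⟪c, z' - z⟫ ≤ fm a α z' - fm a α z} := by
      rintro _ ⟨k, hk, rfl⟩
      simp only [Set.mem_setOf_eq, inner_sub_right]
      have h1 : ⟪a k, z'⟫ - α k ≤ fm a α z' := fm_le k z'
      have h2 : fm a α z = ⟪a k, z⟫ - α k := fm_eq_of_active hz hk
      linarith
    exact convexHull_min hbase hconv hc
  have hspart : ⟪s, z' - z⟫ ≤ 0 := by
    obtain ⟨n, cf, y, hcf, hy, rfl⟩ := hs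
    rw [sum_inner]
    apply Finset.sum_nonpos
    intro i _
    rw [real_inner_smul_left]
    obtain ⟨j, hj, hji⟩ := hy i
    have hyi : ⟪y i, z' - z⟫ ≤ 0 := by
      rw [← hji, inner_sub_right]
      have h3 := hz' j
      have h4 := hz.2.1 j hj
      linarith
    exact mul_nonpos_of_nonneg_of_nonpos (hcf i) hyi
  rw [inner_add_left]
  linarith

lemma subdiff_isClosed {z : Euc m} (hz : z ∈ cpwlDom d β) :
    IsClosed (subdiff (cpwlFun a α d β) z) := by
  have he : subdiff (cpwlFun a α d β) z =
      ⋂ (z' : Euc m) (_ : z' ∈ cpwlDom d β),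
        {v : Euc m | fm a α z + ⟪v, z' - z⟫ ≤ fm a α z'} := by
    ext v
    simp only [Set.mem_iInter, Set.mem_setOf_eq]
    exact mem_subdiff_iff hz v
  rw [he]
  refine isClosed_iInter fun z' => isClosed_iInter fun _ => ?_
  exact isClosed_le (continuous_const.add (continuous_id.inner continuous_const)) continuous_const

lemma Eset_subset_subdiff {K I z} (hz : z ∈ cellC a α d β K I) :
    closure (Eraw a d K I) ⊆ subdiff (cpwlFun a α d β) z :=
  closure_minimal (Eraw_subset_subdiff hz) (subdiff_isClosed hz.1)

lemma cellC_isClosed (K : Set (Fin l)) (I : Set (Fin p)) : IsClosed (cellC a α d β K I) := by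
  have he : cellC a α d β K I =
      (⋂ i, {z : Euc m | ⟪d i, z⟫ ≤ β i}) ∩
      ((⋂ i ∈ I, {z : Euc m | ⟪d i, z⟫ = β i}) ∩
       (⋂ k ∈ K, ⋂ j, {z : Euc m | ⟪a j, z⟫ - α j ≤ ⟪a k, z⟫ - α k})) := by
    ext z
    simp only [cellC, Set.mem_setOf_eq, Set.mem_inter_iff, Set.mem_iInter, cpwlDom]
  rw [he]
  refine IsClosed.inter
    (isClosed_iInter fun i => isClosed_le (continuous_const.inner continuous_id) continuous_const)
    (IsClosed.inter
      (isClosed_iInter fun i => isClosed_iInter fun _ =>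
        isClosed_eq (continuous_const.inner continuous_id) continuous_const)
      (isClosed_iInter fun k => isClosed_iInter fun _ => isClosed_iInter fun j =>
        isClosed_le ((continuous_const.inner continuous_id).sub continuous_const)
          ((continuous_const.inner continuous_id).sub continuous_const)))

lemma Eraw_convex (K : Set (Fin l)) (I : Set (Fin p)) : Convex ℝ (Eraw a d K I) :=
  (convex_convexHull ℝ _).add (MyCone.convex _)

end MyCPWL

namespace MyCPWL
variable {m l p : ℕ} {a : Fin l → Euc m} {α : Fin l → ℝ} {d : Fin p → Euc m} {β : Fin p → ℝ}

variable (a α) in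
def KactS (z : Euc m) : Set (Fin l) := {i | fm a α z = ⟪a i, z⟫ - α i}

variable (d β) in
def IactS (z : Euc m) : Set (Fin p) := {i | ⟪d i, z⟫ = β i}

lemma mem_cell_self {z : Euc m} (hz : z ∈ cpwlDom d β) :
    z ∈ cellC a α d β (KactS a α z) (IactS d β z) := by
  refine ⟨hz, fun i hi => hi, fun k hk j => ?_⟩
  have := fm_le (a := a) (α := α) j z
  have hk' : fm a α z = ⟪a k, z⟫ - α k := hk
  linarith

lemma inner_add_smul (x z η : Euc m) (t : ℝ) : ⟪x, z + t • η⟫ = ⟪x, z⟫ + t * ⟪x, η⟫ := by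
  rw [inner_add_right, real_inner_smul_right]

/-- Hard inclusion: every subgradient lies in the closure of conv + cone of active data. -/
lemma subdiff_subset_closure_Eraw (hl : 0 < l) {z u : Euc m} (hz : z ∈ cpwlDom d β)
    (hu : u ∈ subdiff (cpwlFun a α d β) z) :
    u ∈ closure (Eraw a d (KactS a α z) (IactS d β z)) := by
  haveI : Nonempty (Fin l) := Fin.pos_iff_nonempty.mp hl
  by_contra hnot
  set K := KactS a α z with hK
  set I := IactS d β z with hI
  obtain ⟨f, r, hfu, hfS⟩ := geometric_hahn_banach_point_closed
    ((Eraw_convex (a := a) (d := d) K I).closure) isClosed_closure hnot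
  have hfS' : ∀ b ∈ Eraw a d K I, r < f b := fun b hb => hfS b (subset_closure hb)
  -- basic members of Eraw
  have hmem : ∀ k ∈ K, a k ∈ Eraw a d K I := by
    intro k hk
    have : a k + 0 ∈ Eraw a d K I :=
      Set.add_mem_add (subset_convexHull ℝ _ ⟨k, hk, rfl⟩) (MyCone.zero_mem _)
    simpa using this
  obtain ⟨k₀, hk₀⟩ := exists_fm_eq (a := a) (α := α) hl z
  have hk₀K : k₀ ∈ K := hk₀
  -- f is nonneg on the d i, i ∈ I
  have hdpos : ∀ i ∈ I, 0 ≤ f (d i) := by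
    intro i hi
    by_contra hneg
    push_neg at hneg
    have hnum : 0 < f (a k₀) - r := by have := hfS' _ (hmem k₀ hk₀K); linarith
    have hden : 0 < -(f (d i)) := by linarith
    set t : ℝ := (f (a k₀) - r) / (-(f (d i))) + 1 with ht
    have htpos : 0 < t :=
      add_pos_of_nonneg_of_pos (div_nonneg hnum.le hden.le) one_pos
    have hmem2 : a k₀ + t • d i ∈ Eraw a d K I :=
      Set.add_mem_add (subset_convexHull ℝ _ ⟨k₀, hk₀K, rfl⟩)
        (MyCone.smul_single_mem _ (Set.mem_image_of_mem d hi) htpos.le)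
    have hgt := hfS' _ hmem2
    rw [map_add, map_smul] at hgt
    have key : t * (-(f (d i))) = (f (a k₀) - r) + (-(f (d i))) := by
      rw [ht, add_mul, div_mul_cancel₀ _ hden.ne', one_mul]
    simp only [smul_eq_mul] at hgt
    nlinarith
  -- the separating direction
  set η : Euc m := (InnerProductSpace.toDual ℝ (Euc m)).symm (-f) with hη
  have hηx : ∀ x : Euc m, ⟪η, x⟫ = -(f x) := by
    intro x; rw [hη, InnerProductSpace.toDual_symm_apply]; rfl
  set c : ℝ := -r with hc
  have hKlt : ∀ k ∈ K, ⟪a k, η⟫ < c := by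
    intro k hk
    rw [real_inner_comm, hηx]
    have := hfS' _ (hmem k hk); linarith
  have huc : c < ⟪u, η⟫ := by
    rw [real_inner_comm, hηx]; linarith
  have hdle : ∀ i ∈ I, ⟪d i, η⟫ ≤ 0 := by
    intro i hi; rw [real_inner_comm, hηx]
    have := hdpos i hi; linarith
  -- eventual feasibility and value bound along z + t η, t → 0⁺
  have evt : ∀ᶠ t : ℝ in 𝓝[>] 0, 0 < t := eventually_mem_nhdsWithin
  have evA : ∀ᶠ t : ℝ in 𝓝[>] 0, ∀ i : Fin p, ⟪d i, z + t • η⟫ ≤ β i := by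
    rw [Filter.eventually_all]
    intro i
    by_cases hi : i ∈ I
    · filter_upwards [evt] with t ht
      rw [inner_add_smul]
      have h1 : ⟪d i, z⟫ = β i := hi
      nlinarith [hdle i hi]
    · have hlt : ⟪d i, z⟫ < β i := lt_of_le_of_ne (hz i) hi
      have hcont : Filter.Tendsto (fun t : ℝ => ⟪d i, z + t • η⟫) (𝓝[>] 0) (𝓝 (⟪d i, z⟫)) := by
        have : Filter.Tendsto (fun t : ℝ => ⟪d i, z⟫ + t * ⟪d i, η⟫) (𝓝 0) (𝓝 (⟪d i, z⟫ + 0 * ⟪d i, η⟫)) := by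
          exact (continuous_const.add (continuous_id.mul continuous_const)).tendsto 0
        simp only [zero_mul, add_zero] at this
        refine Filter.Tendsto.congr (fun t => (inner_add_smul _ _ _ _).symm) (this.mono_left nhdsWithin_le_nhds)
      exact hcont.eventually_lt_const hlt |>.mono fun t h => h.le
  have evB : ∀ᶠ t : ℝ in 𝓝[>] 0, ∀ j : Fin l, ⟪a j, z + t • η⟫ - α j ≤ fm a α z + t * c := by
    rw [Filter.eventually_all]
    intro j
    by_cases hj : j ∈ K
    · filter_upwards [evt] with t ht
      rw [inner_add_smul]
      have h1 : fm a α z = ⟪a j, z⟫ - α j := hj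
      nlinarith [hKlt j hj]
    · have hlt : ⟪a j, z⟫ - α j < fm a α z := lt_of_le_of_ne (fm_le j z) (fun h => hj (Set.mem_setOf_eq ▸ h.symm))
      have hcont : Filter.Tendsto (fun t : ℝ => ⟪a j, z + t • η⟫ - α j - (fm a α z + t * c)) (𝓝[>] 0)
          (𝓝 (⟪a j, z⟫ - α j - fm a α z)) := by
        have : Filter.Tendsto (fun t : ℝ => (⟪a j, z⟫ + t * ⟪a j, η⟫) - α j - (fm a α z + t * c)) (𝓝 0)
            (𝓝 ((⟪a j, z⟫ + 0 * ⟪a j, η⟫) - α j - (fm a α z + 0 * c))) := by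
          exact (((continuous_const.add (continuous_id.mul continuous_const)).sub continuous_const).sub (continuous_const.add (continuous_id.mul continuous_const))).tendsto 0
        simp only [zero_mul, add_zero] at this
        refine Filter.Tendsto.congr (fun t => by rw [inner_add_smul]) (this.mono_left nhdsWithin_le_nhds)
      have := hcont.eventually_lt_const (by linarith : ⟪a j, z⟫ - α j - fm a α z < 0)
      exact this.mono fun t h => by linarith
  obtain ⟨t, htpos, hA, hB⟩ := (evt.and (evA.and evB)).exists
  set z' := z + t • η with hz'
  have hz'D : z' ∈ cpwlDom d β := fun i => hA i
  have hfm' : fm a α z' ≤ fm a α z + t * c := ciSup_le fun j => hB j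
  have hsub := (mem_subdiff_iff hz u).mp hu z' hz'D
  have hinner : ⟪u, z' - z⟫ = t * ⟪u, η⟫ := by
    rw [hz', add_sub_cancel_left, real_inner_smul_right]
  rw [hinner] at hsub
  nlinarith
end MyCPWL

section NormalCone
variable {E' : Type*} [NormedAddCommGroup E'] [InnerProductSpace ℝ E']


lemma quot_le_norm (v x y : E') : ⟪v, y - x⟫ / ‖y - x‖ ≤ ‖v‖ := by
  rcases eq_or_ne y x with rfl | h
  · simp
  · rw [div_le_iff₀ (by rw [norm_pos_iff, sub_ne_zero]; exact h)]
    exact real_inner_le_norm v (y - x)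

/-- A Fréchet normal is globally polar to any convex subset through the point. -/
lemma frechet_polar_of_convex {Ω P : Set E'} {x v : E'}
    (hv : Filter.limsup (fun y => ⟪v, y - x⟫ / ‖y - x‖) (𝓝[Ω] x) ≤ 0)
    (hP : P ⊆ Ω) (hconv : Convex ℝ P) (hx : x ∈ P) {y : E'} (hy : y ∈ P) :
    ⟪v, y - x⟫ ≤ 0 := by
  by_contra hpos
  push_neg at hpos
  have hyx : y ≠ x := by
    rintro rfl; simp at hpos
  have hnorm : 0 < ‖y - x‖ := by
    rw [norm_pos_iff, sub_ne_zero]; exact hyx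
  set ε : ℝ := ⟪v, y - x⟫ / ‖y - x‖ with hε
  have hεpos : 0 < ε := div_pos hpos hnorm
  have hbdd : Filter.IsBoundedUnder (· ≤ ·) (𝓝[Ω] x)
      (fun y' => ⟪v, y' - x⟫ / ‖y' - x‖) :=
    Filter.isBoundedUnder_of ⟨‖v‖, fun y' => quot_le_norm v x y'⟩
  have hev := Filter.eventually_lt_of_limsup_lt (lt_of_le_of_lt hv hεpos) hbdd
  have hcurve : Filter.Tendsto (fun t : ℝ => x + t • (y - x)) (𝓝[>] 0) (𝓝[Ω] x) := by
    rw [tendsto_nhdsWithin_iff]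
    constructor
    · have h1 : Filter.Tendsto (fun t : ℝ => x + t • (y - x)) (𝓝 0) (𝓝 (x + (0:ℝ) • (y - x))) :=
        (continuous_const.add (continuous_id.smul continuous_const)).tendsto 0
      simp only [zero_smul, add_zero] at h1
      exact h1.mono_left nhdsWithin_le_nhds
    · have hIoc : Set.Ioc (0:ℝ) 1 ∈ 𝓝[>] (0:ℝ) := Ioc_mem_nhdsGT_of_mem ⟨le_refl 0, zero_lt_one⟩
      filter_upwards [hIoc] with t ht
      have : x + t • (y - x) = (1 - t) • x + t • y := by
        rw [sub_smul, one_smul, smul_sub]; abel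
      rw [this]
      exact hP (hconv hx hy (by linarith [ht.2]) ht.1.le (by ring))
  have hev2 := hcurve.eventually hev
  have hevt : ∀ᶠ t : ℝ in 𝓝[>] 0, 0 < t := eventually_mem_nhdsWithin
  obtain ⟨t, hq, htpos⟩ := (hev2.and hevt).exists
  have : ⟪v, (x + t • (y - x)) - x⟫ / ‖(x + t • (y - x)) - x‖ = ε := by
    rw [add_sub_cancel_left, real_inner_smul_right, norm_smul, Real.norm_eq_abs,
      abs_of_pos htpos, hε, mul_div_mul_left _ _ htpos.ne']
  rw [this] at hq
  exact lt_irrefl ε hq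

/-- limits of frequently nonpositive sequences are nonpositive -/
lemma le_zero_of_tendsto_frequently {f : ℕ → ℝ} {L : ℝ}
    (hf : Filter.Tendsto f Filter.atTop (𝓝 L)) (hfreq : ∃ᶠ k in Filter.atTop, f k ≤ 0) :
    L ≤ 0 := by
  by_contra hL
  push_neg at hL
  have hev : ∀ᶠ k in Filter.atTop, 0 < f k := hf.eventually_const_lt hL
  obtain ⟨k, h1, h2⟩ := (hfreq.and_eventually hev).exists
  linarith

end NormalCone

namespace MyCPWL
variable {m l p : ℕ} {a : Fin l → Euc m} {α : Fin l → ℝ} {d : Fin p → Euc m} {β : Fin p → ℝ}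

variable (a α d β) in
def GG : Set (WithLp 2 (Euc m × Euc m)) :=
  {q | ((WithLp.equiv 2 (Euc m × Euc m)) q).2 ∈
    subdiff (cpwlFun a α d β) ((WithLp.equiv 2 (Euc m × Euc m)) q).1}

variable (a α d β) in
def pieceQ (K : Set (Fin l)) (I : Set (Fin p)) : Set (WithLp 2 (Euc m × Euc m)) :=
  {q | ((WithLp.equiv 2 (Euc m × Euc m)) q).1 ∈ cellC a α d β K I ∧
       ((WithLp.equiv 2 (Euc m × Euc m)) q).2 ∈ closure (Eraw a d K I)}

lemma cellC_convex (K : Set (Fin l)) (I : Set (Fin p)) : Convex ℝ (cellC a α d β K I) := by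
  intro x hx y hy tx ty htx hty htxy
  have key : ∀ (c : Euc m), ⟪c, tx • x + ty • y⟫ = tx * ⟪c, x⟫ + ty * ⟪c, y⟫ := by
    intro c; rw [inner_add_right, real_inner_smul_right, real_inner_smul_right]
  refine ⟨fun i => ?_, fun i hi => ?_, fun k hk j => ?_⟩
  · rw [key]
    have h1 := mul_le_mul_of_nonneg_left (hx.1 i) htx
    have h2 := mul_le_mul_of_nonneg_left (hy.1 i) hty
    have h3 : tx * β i + ty * β i = β i := by rw [← add_mul, htxy, one_mul]
    linarith
  · rw [key, hx.2.1 i hi, hy.2.1 i hi, ← add_mul, htxy, one_mul]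
  · rw [key, key]
    have h1 := mul_le_mul_of_nonneg_left (hx.2.2 k hk j) htx
    have h2 := mul_le_mul_of_nonneg_left (hy.2.2 k hk j) hty
    have h3 : tx * (α j) + ty * (α j) = α j := by rw [← add_mul, htxy, one_mul]
    have h4 : tx * (α k) + ty * (α k) = α k := by rw [← add_mul, htxy, one_mul]
    nlinarith
  
lemma pieceQ_convex (K : Set (Fin l)) (I : Set (Fin p)) : Convex ℝ (pieceQ a α d β K I) := by
  intro q hq q' hq' tx ty htx hty htxy
  refine ⟨?_, ?_⟩
  · exact cellC_convex K I hq.1 hq'.1 htx hty htxy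
  · exact ((Eraw_convex (a := a) (d := d) K I).closure) hq.2 hq'.2 htx hty htxy

lemma pieceQ_isClosed (K : Set (Fin l)) (I : Set (Fin p)) : IsClosed (pieceQ a α d β K I) := by
  have hc1 : Continuous (fun q : WithLp 2 (Euc m × Euc m) =>
      ((WithLp.equiv 2 (Euc m × Euc m)) q).1) :=
    continuous_fst.comp (WithLp.prodContinuousLinearEquiv 2 ℝ (Euc m) (Euc m)).continuous
  have hc2 : Continuous (fun q : WithLp 2 (Euc m × Euc m) =>
      ((WithLp.equiv 2 (Euc m × Euc m)) q).2) :=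
    continuous_snd.comp (WithLp.prodContinuousLinearEquiv 2 ℝ (Euc m) (Euc m)).continuous
  exact ((cellC_isClosed K I).preimage hc1).inter (isClosed_closure.preimage hc2)

lemma pieceQ_subset_GG (K : Set (Fin l)) (I : Set (Fin p)) :
    pieceQ a α d β K I ⊆ GG a α d β :=
  fun _ hq => Eset_subset_subdiff hq.1 hq.2

lemma mem_pieceQ_self (hl : 0 < l) (hdom : (cpwlDom d β).Nonempty)
    {q : WithLp 2 (Euc m × Euc m)} (hq : q ∈ GG a α d β) :
    q ∈ pieceQ a α d β (KactS a α ((WithLp.equiv 2 (Euc m × Euc m)) q).1)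
      (IactS d β ((WithLp.equiv 2 (Euc m × Euc m)) q).1) := by
  have hzD := mem_dom_of_subdiff hdom hq
  exact ⟨mem_cell_self hzD, subdiff_subset_closure_Eraw hl hzD hq⟩

end MyCPWL

namespace MyCPWL
variable {m l p : ℕ} {a : Fin l → Euc m} {α : Fin l → ℝ} {d : Fin p → Euc m} {β : Fin p → ℝ}

lemma sosd_subset_spar (hl : 0 < l) (hdom : (cpwlDom d β).Nonempty)
    {zb vb : Euc m} (hzb : zb ∈ cpwlDom d β) (hvb : vb ∈ subdiff (cpwlFun a α d β) zb)
    {w : Euc m}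
    (hw : pl2 w 0 ∈ limitingNormal (GG a α d β) (pl2 zb vb)) :
    w ∈ (affineSpan ℝ (subdiff (cpwlFun a α d β) zb)).direction := by
  obtain ⟨xs, vs, hxsG, hxs, hvs, hfr⟩ := hw
  set piece : ℕ → Set (Fin l) × Set (Fin p) := fun k =>
    (KactS a α ((WithLp.equiv 2 (Euc m × Euc m)) (xs k)).1,
     IactS d β ((WithLp.equiv 2 (Euc m × Euc m)) (xs k)).1) with hpiece
  obtain ⟨KI, hKI⟩ := Finite.exists_infinite_fiber piece
  set K₀ := KI.1 with hK₀
  set I₀ := KI.2 with hI₀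
  have hfreq : ∃ᶠ k in Filter.atTop, piece k = KI := by
    rw [Nat.frequently_atTop_iff_infinite]
    exact Set.infinite_coe_iff.mp hKI
  have hmemQ : ∀ k, piece k = KI → xs k ∈ pieceQ a α d β K₀ I₀ := by
    intro k hk
    have h := mem_pieceQ_self hl hdom (hxsG k)
    have hk1 : KactS a α ((WithLp.equiv 2 (Euc m × Euc m)) (xs k)).1 = K₀ := congrArg Prod.fst hk
    have hk2 : IactS d β ((WithLp.equiv 2 (Euc m × Euc m)) (xs k)).1 = I₀ := congrArg Prod.snd hk
    rwa [hk1, hk2] at h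
  have hfreqQ : ∃ᶠ k in Filter.atTop, xs k ∈ pieceQ a α d β K₀ I₀ :=
    hfreq.mono fun k hk => hmemQ k hk
  have hxbar : pl2 zb vb ∈ pieceQ a α d β K₀ I₀ := by
    have h := mem_closure_of_frequently_of_tendsto hfreqQ hxs
    rwa [(pieceQ_isClosed K₀ I₀).closure_eq] at h
  have hpolar : ∀ y ∈ pieceQ a α d β K₀ I₀, ⟪pl2 w 0, y - pl2 zb vb⟫ ≤ 0 := by
    intro y hy
    have htend : Filter.Tendsto (fun k => ⟪vs k, y - xs k⟫) Filter.atTop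
        (𝓝 ⟪pl2 w 0, y - pl2 zb vb⟫) :=
      hvs.inner (tendsto_const_nhds.sub hxs)
    refine le_zero_of_tendsto_frequently htend (hfreq.mono ?_)
    intro k hk
    exact frechet_polar_of_convex (hfr k) (pieceQ_subset_GG K₀ I₀)
      (pieceQ_convex K₀ I₀) (hmemQ k hk) hy
  have hzbC : zb ∈ cellC a α d β K₀ I₀ := hxbar.1
  have hvbE : vb ∈ closure (Eraw a d K₀ I₀) := hxbar.2
  have hKsub : ∀ k ∈ K₀, k ∈ KactS a α zb := fun k hk => fm_eq_of_active hzbC hk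
  have hIsub : ∀ i ∈ I₀, i ∈ IactS d β zb := fun i hi => hzbC.2.1 i hi
  set S := (affineSpan ℝ (subdiff (cpwlFun a α d β) zb)).direction with hSdef
  -- active gradients lie in the subdifferential
  have hsubK : ∀ j ∈ KactS a α zb, a j ∈ subdiff (cpwlFun a α d β) zb := by
    intro j hj
    rw [mem_subdiff_iff hzb]
    intro z' hz'
    have h1 : fm a α zb = ⟪a j, zb⟫ - α j := hj
    have h2 := fm_le (a := a) (α := α) j z'
    rw [inner_sub_right]
    linarith
  have haS : ∀ j ∈ KactS a α zb, ∀ k ∈ KactS a α zb, a j - a k ∈ S := by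
    intro j hj k hk
    have := AffineSubspace.vsub_mem_direction
      (subset_affineSpan ℝ _ (hsubK j hj)) (subset_affineSpan ℝ _ (hsubK k hk))
    simpa [vsub_eq_sub] using this
  have hdS : ∀ i ∈ IactS d β zb, d i ∈ S := by
    intro i hi
    have hmem : vb + d i ∈ subdiff (cpwlFun a α d β) zb := by
      rw [mem_subdiff_iff hzb]
      intro z' hz'
      have h1 := (mem_subdiff_iff hzb vb).mp hvb z' hz'
      have h2 : ⟪d i, zb⟫ = β i := hi
      have h3 := hz' i
      rw [inner_add_left, inner_sub_right]
      rw [inner_sub_right] at h1 ⊢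
      linarith
    have := AffineSubspace.vsub_mem_direction
      (subset_affineSpan ℝ _ hmem) (subset_affineSpan ℝ _ hvb)
    simpa [vsub_eq_sub] using this
  -- every direction orthogonal to S pairs nonpositively with w
  have horth : ∀ ξ, ξ ∈ Sᗮ → ⟪w, ξ⟫ ≤ 0 := by
    intro ξ hξ
    have hξS : ∀ u ∈ S, ⟪u, ξ⟫ = 0 := (Submodule.mem_orthogonal S ξ).mp hξ
    have hξd : ∀ i ∈ IactS d β zb, ⟪d i, ξ⟫ = 0 := fun i hi => hξS _ (hdS i hi)
    have hξa : ∀ j ∈ KactS a α zb, ∀ k ∈ KactS a α zb, ⟪a j, ξ⟫ = ⟪a k, ξ⟫ := by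
      intro j hj k hk
      have := hξS _ (haS j hj k hk)
      rw [inner_sub_left] at this
      linarith
    have evt : ∀ᶠ t : ℝ in 𝓝[>] 0, 0 < t := eventually_mem_nhdsWithin
    have evDom : ∀ᶠ t : ℝ in 𝓝[>] 0, ∀ i : Fin p, ⟪d i, zb + t • ξ⟫ ≤ β i := by
      rw [Filter.eventually_all]
      intro i
      by_cases hi : i ∈ IactS d β zb
      · refine Filter.Eventually.of_forall fun t => ?_
        rw [inner_add_smul, hξd i hi]
        have h1 : ⟪d i, zb⟫ = β i := hi
        simp [h1]
      · have hlt : ⟪d i, zb⟫ < β i := lt_of_le_of_ne (hzb i) hi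
        have hcont : Filter.Tendsto (fun t : ℝ => ⟪d i, zb + t • ξ⟫) (𝓝[>] 0) (𝓝 (⟪d i, zb⟫)) := by
          have h2 : Filter.Tendsto (fun t : ℝ => ⟪d i, zb⟫ + t * ⟪d i, ξ⟫) (𝓝 0)
              (𝓝 (⟪d i, zb⟫ + 0 * ⟪d i, ξ⟫)) :=
            (continuous_const.add (continuous_id.mul continuous_const)).tendsto 0
          simp only [zero_mul, add_zero] at h2
          exact Filter.Tendsto.congr (fun t => (inner_add_smul _ _ _ _).symm)
            (h2.mono_left nhdsWithin_le_nhds)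
        exact (hcont.eventually_lt_const hlt).mono fun t h => h.le
    have evI : ∀ᶠ t : ℝ in 𝓝[>] 0, ∀ i ∈ I₀, ⟪d i, zb + t • ξ⟫ = β i := by
      refine Filter.Eventually.of_forall fun t i hi => ?_
      rw [inner_add_smul, hξd i (hIsub i hi)]
      have h1 : ⟪d i, zb⟫ = β i := hIsub i hi
      simp [h1]
    have evK : ∀ᶠ t : ℝ in 𝓝[>] 0, ∀ k ∈ K₀, ∀ j : Fin l,
        ⟪a j, zb + t • ξ⟫ - α j ≤ ⟪a k, zb + t • ξ⟫ - α k := by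
      rw [Filter.eventually_all]
      intro k
      by_cases hk : k ∈ K₀
      · have hks := hKsub k hk
        have main : ∀ᶠ t : ℝ in 𝓝[>] 0, ∀ j : Fin l,
            ⟪a j, zb + t • ξ⟫ - α j ≤ ⟪a k, zb + t • ξ⟫ - α k := by
          rw [Filter.eventually_all]
          intro j
          by_cases hj : j ∈ KactS a α zb
          · refine Filter.Eventually.of_forall fun t => ?_
            rw [inner_add_smul, inner_add_smul, hξa j hj k hks]
            have h1 : fm a α zb = ⟪a j, zb⟫ - α j := hj
            have h2 : fm a α zb = ⟪a k, zb⟫ - α k := hks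
            linarith
          · have hlt : ⟪a j, zb⟫ - α j < fm a α zb :=
              lt_of_le_of_ne (fm_le j zb) (fun h => hj (Set.mem_setOf_eq ▸ h.symm))
            have h2 : fm a α zb = ⟪a k, zb⟫ - α k := hks
            have hcont : Filter.Tendsto
                (fun t : ℝ => (⟪a j, zb + t • ξ⟫ - α j) - (⟪a k, zb + t • ξ⟫ - α k)) (𝓝[>] 0)
                (𝓝 ((⟪a j, zb⟫ - α j) - (⟪a k, zb⟫ - α k))) := by
              have h3 : Filter.Tendsto
                  (fun t : ℝ => (⟪a j, zb⟫ + t * ⟪a j, ξ⟫ - α j) - (⟪a k, zb⟫ + t * ⟪a k, ξ⟫ - α k)) (𝓝 0)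
                  (𝓝 ((⟪a j, zb⟫ + 0 * ⟪a j, ξ⟫ - α j) - (⟪a k, zb⟫ + 0 * ⟪a k, ξ⟫ - α k))) := by
                exact (((continuous_const.add (continuous_id.mul continuous_const)).sub
                  continuous_const).sub ((continuous_const.add
                  (continuous_id.mul continuous_const)).sub continuous_const)).tendsto 0
              simp only [zero_mul, add_zero] at h3
              exact Filter.Tendsto.congr (fun t => by rw [inner_add_smul, inner_add_smul])
                (h3.mono_left nhdsWithin_le_nhds)
            have h4 := hcont.eventually_lt_const (by linarith :
              (⟪a j, zb⟫ - α j) - (⟪a k, zb⟫ - α k) < 0)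
            exact h4.mono fun t h => by linarith
        exact main.mono fun t h _ => h
      · exact Filter.Eventually.of_forall fun t h => absurd h hk
    obtain ⟨t, ⟨htpos, hD'⟩, hI', hK'⟩ := ((evt.and evDom).and (evI.and evK)).exists
    have hcell : zb + t • ξ ∈ cellC a α d β K₀ I₀ := ⟨hD', hI', fun k hk j => hK' k hk j⟩
    have hy : pl2 (zb + t • ξ) vb ∈ pieceQ a α d β K₀ I₀ := ⟨hcell, hvbE⟩
    have hineq := hpolar _ hy
    have hcalc : ⟪pl2 w 0, pl2 (zb + t • ξ) vb - pl2 zb vb⟫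
        = ⟪w, (zb + t • ξ) - zb⟫ + ⟪(0 : Euc m), vb - vb⟫ := rfl
    rw [hcalc] at hineq
    rw [add_sub_cancel_left, real_inner_smul_right, inner_zero_left, add_zero] at hineq
    nlinarith
  have horth0 : ∀ ξ ∈ Sᗮ, ⟪ξ, w⟫ = 0 := by
    intro ξ hξ
    have h1 := horth ξ hξ
    have h2 := horth (-ξ) (Submodule.neg_mem _ hξ)
    rw [inner_neg_right] at h2
    rw [real_inner_comm]
    linarith
  have : w ∈ Sᗮᗮ := (Submodule.mem_orthogonal Sᗮ w).mpr horth0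
  rwa [Submodule.orthogonal_orthogonal] at this

end MyCPWL

section LowerBound
variable {E : Type*} [NormedAddCommGroup E] [InnerProductSpace ℝ E]

lemma neg_norm_le_quot (v x y : E) : -‖v‖ ≤ ⟪v, y - x⟫ / ‖y - x‖ := by
  rcases eq_or_ne y x with rfl | h
  · simp
  · rw [le_div_iff₀ (by rw [norm_pos_iff, sub_ne_zero]; exact h)]
    have h1 : |⟪v, y - x⟫| ≤ ‖v‖ * ‖y - x‖ := abs_real_inner_le_norm v (y - x)
    have h2 := neg_abs_le (⟪v, y - x⟫ : ℝ)
    nlinarith [norm_nonneg (y - x), norm_nonneg v]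

end LowerBound

namespace MyCPWL
variable {m l p : ℕ} {a : Fin l → Euc m} {α : Fin l → ℝ} {d : Fin p → Euc m} {β : Fin p → ℝ}

lemma pl2_norm_fst (x y : Euc m) : ‖x‖ ≤ ‖pl2 x y‖ := by
  have h : ‖pl2 x y‖ ^ 2 = ‖x‖ ^ 2 + ‖y‖ ^ 2 := by
    rw [WithLp.prod_norm_sq_eq_of_L2]; rfl
  nlinarith [norm_nonneg x, norm_nonneg y, norm_nonneg (pl2 x y)]

lemma pl2_norm_snd (x y : Euc m) : ‖y‖ ≤ ‖pl2 x y‖ := by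
  have h : ‖pl2 x y‖ ^ 2 = ‖x‖ ^ 2 + ‖y‖ ^ 2 := by
    rw [WithLp.prod_norm_sq_eq_of_L2]; rfl
  nlinarith [norm_nonneg x, norm_nonneg y, norm_nonneg (pl2 x y)]

/-- The key Fréchet normality estimate at perturbed base points. -/
lemma frechet_at (hdom : (cpwlDom d β).Nonempty) {zb : Euc m} (hzb : zb ∈ cpwlDom d β)
    {w v' : Euc m} (hv' : v' ∈ subdiff (cpwlFun a α d β) zb) {t : ℝ} (ht : 0 < t)
    (hvt : v' + t • w ∈ subdiff (cpwlFun a α d β) zb) :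
    Filter.limsup (fun y => ⟪pl2 w 0, y - pl2 zb v'⟫ / ‖y - pl2 zb v'‖)
      (𝓝[GG a α d β] (pl2 zb v')) ≤ 0 := by
  set x₀ : WithLp 2 (Euc m × Euc m) := pl2 zb v' with hx₀
  have hGmem : x₀ ∈ GG a α d β := hv'
  haveI : (𝓝[GG a α d β] x₀).NeBot :=
    mem_closure_iff_nhdsWithin_neBot.mp (subset_closure hGmem)
  have hbdd : Filter.IsBoundedUnder (· ≥ ·) (𝓝[GG a α d β] x₀)
      (fun y => ⟪pl2 w 0, y - x₀⟫ / ‖y - x₀‖) :=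
    Filter.isBoundedUnder_of
      ⟨-‖pl2 w (0 : Euc m)‖, fun y => neg_norm_le_quot (pl2 w (0 : Euc m)) x₀ y⟩
  have hcob : Filter.IsCoboundedUnder (· ≤ ·) (𝓝[GG a α d β] x₀)
      (fun y => ⟪pl2 w 0, y - x₀⟫ / ‖y - x₀‖) := hbdd.isCoboundedUnder_le
  have hkey : ∀ ε : ℝ, 0 < ε →
      Filter.limsup (fun y => ⟪pl2 w 0, y - x₀⟫ / ‖y - x₀‖) (𝓝[GG a α d β] x₀) ≤ ε := by
    intro ε hε
    refine Filter.limsup_le_of_le hcob ?_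
    have hball : ∀ᶠ y in 𝓝 x₀, ‖y - x₀‖ < ε * t := by
      filter_upwards [Metric.ball_mem_nhds x₀ (by positivity : (0:ℝ) < ε * t)] with y hy
      rwa [Metric.mem_ball, dist_eq_norm] at hy
    filter_upwards [hball.filter_mono nhdsWithin_le_nhds, eventually_mem_nhdsWithin] with y hy hyG
    set z : Euc m := ((WithLp.equiv 2 (Euc m × Euc m)) y).1 with hz
    set u : Euc m := ((WithLp.equiv 2 (Euc m × Euc m)) y).2 with hu
    have huz : u ∈ subdiff (cpwlFun a α d β) z := hyG
    have hzD : z ∈ cpwlDom d β := mem_dom_of_subdiff hdom huz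
    have hrepr : y - x₀ = pl2 (z - zb) (u - v') := rfl
    have hnum : ⟪pl2 w 0, y - x₀⟫ = ⟪w, z - zb⟫ := by
      have : ⟪pl2 w 0, y - x₀⟫ = ⟪w, z - zb⟫ + ⟪(0 : Euc m), u - v'⟫ := rfl
      rw [this, inner_zero_left, add_zero]
    have h1 : ‖z - zb‖ ≤ ‖y - x₀‖ := by rw [hrepr]; exact pl2_norm_fst _ _
    have h2 : ‖u - v'‖ ≤ ‖y - x₀‖ := by rw [hrepr]; exact pl2_norm_snd _ _
    rw [hnum]
    rcases le_or_gt (⟪w, z - zb⟫ : ℝ) 0 with hn | hn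
    · exact le_trans (div_nonpos_of_nonpos_of_nonneg hn (norm_nonneg _)) hε.le
    · have hzzb : (0:ℝ) < ‖z - zb‖ := by
        rcases eq_or_ne z zb with he | he
        · exfalso; rw [he, sub_self, inner_zero_right] at hn; exact lt_irrefl 0 hn
        · rw [norm_pos_iff, sub_ne_zero]; exact he
      have hny : (0:ℝ) < ‖y - x₀‖ := lt_of_lt_of_le hzzb h1
      rw [div_le_iff₀ hny]
      have hmono := subdiff_mono hzD hzb huz hvt
      have hexp : ⟪u - (v' + t • w), z - zb⟫
          = ⟪u - v', z - zb⟫ - t * ⟪w, z - zb⟫ := by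
        have : u - (v' + t • w) = (u - v') - t • w := by abel
        rw [this, inner_sub_left, real_inner_smul_left]
      rw [hexp] at hmono
      have hcs : ⟪u - v', z - zb⟫ ≤ ‖u - v'‖ * ‖z - zb‖ := real_inner_le_norm _ _
      have huv : ‖u - v'‖ < ε * t := lt_of_le_of_lt h2 hy
      nlinarith [norm_nonneg (u - v')]
  by_contra hcon
  push_neg at hcon
  have := hkey _ (half_pos hcon)
  linarith
end MyCPWL

namespace MyCPWL
variable {m l p : ℕ} {a : Fin l → Euc m} {α : Fin l → ℝ} {d : Fin p → Euc m} {β : Fin p → ℝ}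

lemma spar_subset_sosd (hdom : (cpwlDom d β).Nonempty) {zb vb : Euc m}
    (hzb : zb ∈ cpwlDom d β) (hvb : vb ∈ subdiff (cpwlFun a α d β) zb) {w : Euc m}
    (hw : w ∈ (affineSpan ℝ (subdiff (cpwlFun a α d β) zb)).direction) :
    pl2 w 0 ∈ limitingNormal (GG a α d β) (pl2 zb vb) := by
  set CC := subdiff (cpwlFun a α d β) zb with hCC
  have hscale : ∀ (x v₁ : Euc m) (t₁ : ℝ), 0 < t₁ → v₁ ∈ CC → v₁ + t₁ • x ∈ CC →
      ∀ t : ℝ, 0 < t → t ≤ t₁ → v₁ + t • x ∈ CC := by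
    intro x v₁ t₁ ht₁ h₁ hm₁ t ht htle
    have hs0 : 0 ≤ t / t₁ := by positivity
    have hs1 : t / t₁ ≤ 1 := by rw [div_le_one ht₁]; exact htle
    have hcomb := subdiff_convexchar hzb hm₁ h₁ hs0 hs1
    have halg : (t / t₁) • (v₁ + t₁ • x) + (1 - t / t₁) • v₁ = v₁ + ((t / t₁) * t₁) • x := by
      module
    rw [halg, div_mul_cancel₀ t (ne_of_gt ht₁)] at hcomb
    exact hcomb
  have hzero : ∃ v₀ ∈ CC, ∃ t : ℝ, 0 < t ∧ v₀ + t • (0 : Euc m) ∈ CC :=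
    ⟨vb, hvb, 1, one_pos, by simpa using hvb⟩
  have hadd : ∀ x y : Euc m, (∃ v₀ ∈ CC, ∃ t : ℝ, 0 < t ∧ v₀ + t • x ∈ CC) →
      (∃ v₀ ∈ CC, ∃ t : ℝ, 0 < t ∧ v₀ + t • y ∈ CC) →
      (∃ v₀ ∈ CC, ∃ t : ℝ, 0 < t ∧ v₀ + t • (x + y) ∈ CC) := by
    rintro x y ⟨v₁, h₁, t₁, ht₁, hm₁⟩ ⟨v₂, h₂, t₂, ht₂, hm₂⟩
    have ht : 0 < min t₁ t₂ := lt_min ht₁ ht₂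
    have hA : v₁ + min t₁ t₂ • x ∈ CC := hscale x v₁ t₁ ht₁ h₁ hm₁ _ ht (min_le_left _ _)
    have hB : v₂ + min t₁ t₂ • y ∈ CC := hscale y v₂ t₂ ht₂ h₂ hm₂ _ ht (min_le_right _ _)
    refine ⟨(1/2 : ℝ) • v₁ + (1/2 : ℝ) • v₂, ?_, min t₁ t₂ / 2, by positivity, ?_⟩
    · have hcomb := subdiff_convexchar hzb h₁ h₂ (by norm_num : (0:ℝ) ≤ 1/2) (by norm_num)
      have h12 : (1 - 1/2 : ℝ) = 1/2 := by norm_num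
      rwa [h12] at hcomb
    · have hcomb := subdiff_convexchar hzb hA hB (by norm_num : (0:ℝ) ≤ 1/2) (by norm_num)
      have halg : (1/2 : ℝ) • (v₁ + min t₁ t₂ • x) + (1 - 1/2 : ℝ) • (v₂ + min t₁ t₂ • y)
          = ((1/2 : ℝ) • v₁ + (1/2 : ℝ) • v₂) + (min t₁ t₂ / 2) • (x + y) := by
        have h12 : (1 - 1/2 : ℝ) = 1/2 := by norm_num
        rw [h12]; module
      rwa [halg] at hcomb
  have hsmulpos : ∀ (c : ℝ), 0 < c → ∀ x : Euc m,
      (∃ v₀ ∈ CC, ∃ t : ℝ, 0 < t ∧ v₀ + t • x ∈ CC) →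
      (∃ v₀ ∈ CC, ∃ t : ℝ, 0 < t ∧ v₀ + t • (c • x) ∈ CC) := by
    rintro c hc x ⟨v₁, h₁, t₁, ht₁, hm₁⟩
    refine ⟨v₁, h₁, t₁ / c, by positivity, ?_⟩
    rw [smul_smul, div_mul_cancel₀ t₁ (ne_of_gt hc)]
    exact hm₁
  have hcond : ∀ x : Euc m, x ∈ Submodule.span ℝ (CC -ᵥ CC) →
      (∃ v₀ ∈ CC, ∃ t : ℝ, 0 < t ∧ v₀ + t • x ∈ CC) ∧
      (∃ v₀ ∈ CC, ∃ t : ℝ, 0 < t ∧ v₀ + t • (-x) ∈ CC) := by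
    intro x hx
    induction hx using Submodule.span_induction with
    | mem x hxg =>
      obtain ⟨u, hu, u', hu', rfl⟩ := Set.mem_vsub.mp hxg
      constructor
      · refine ⟨u', hu', 1, one_pos, ?_⟩
        have h : u' + (1:ℝ) • (u -ᵥ u') = u := by
          rw [one_smul, vsub_eq_sub]; abel
        rw [h]; exact hu
      · refine ⟨u, hu, 1, one_pos, ?_⟩
        have h : u + (1:ℝ) • (-(u -ᵥ u')) = u' := by
          rw [one_smul, vsub_eq_sub]; abel
        rw [h]; exact hu'
    | zero => exact ⟨hzero, by simpa using hzero⟩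
    | add x y hx' hy' ihx ihy =>
      constructor
      · exact hadd x y ihx.1 ihy.1
      · have h := hadd (-x) (-y) ihx.2 ihy.2
        have he : -x + -y = -(x + y) := by abel
        rwa [he] at h
    | smul c x hx' ih =>
      rcases lt_trichotomy c 0 with hc | hc | hc
      · constructor
        · have h := hsmulpos (-c) (by linarith) (-x) ih.2
          have he : (-c) • (-x) = c • x := by rw [neg_smul_neg]
          rwa [he] at h
        · have h := hsmulpos (-c) (by linarith) x ih.1
          have he : (-c) • x = -(c • x) := by rw [neg_smul]
          rwa [he] at h
      · subst hc
        constructor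
        · have h := hzero
          have he : (0 : ℝ) • x = (0 : Euc m) := zero_smul _ _
          rw [he]; exact h
        · have h := hzero
          have he : -((0 : ℝ) • x) = (0 : Euc m) := by rw [zero_smul, neg_zero]
          rw [he]; exact h
      · constructor
        · exact hsmulpos c hc x ih.1
        · have h := hsmulpos c hc (-x) ih.2
          have he : c • (-x) = -(c • x) := by rw [smul_neg]
          rwa [he] at h
  rw [direction_affineSpan, vectorSpan_def] at hw
  obtain ⟨⟨v₀, hv₀, t, ht, hvt⟩, -⟩ := hcond w hw
  set sq : ℕ → ℝ := fun k => 1 / ((k : ℝ) + 1) with hsq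
  have hsq_pos : ∀ k, 0 < sq k := fun k => by positivity
  have hsq_le : ∀ k, sq k ≤ 1 := fun k => by
    rw [hsq, div_le_one (by positivity)]
    have h0 : (0:ℝ) ≤ (k:ℝ) := Nat.cast_nonneg k
    linarith
  set vk : ℕ → Euc m := fun k => vb + sq k • (v₀ - vb) with hvkdef
  have hvk : ∀ k, vk k ∈ CC := fun k => by
    have hcomb := subdiff_convexchar hzb hv₀ hvb (hsq_pos k).le (hsq_le k)
    have halg : sq k • v₀ + (1 - sq k) • vb = vb + sq k • (v₀ - vb) := by module
    rw [halg] at hcomb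
    exact hcomb
  have hvkt : ∀ k, vk k + (sq k * t) • w ∈ CC := fun k => by
    have hcomb := subdiff_convexchar hzb hvt hvb (hsq_pos k).le (hsq_le k)
    have halg : sq k • (v₀ + t • w) + (1 - sq k) • vb
        = (vb + sq k • (v₀ - vb)) + (sq k * t) • w := by module
    rw [halg] at hcomb
    exact hcomb
  refine ⟨fun k => pl2 zb (vk k), fun _ => pl2 w 0, fun k => hvk k, ?_, tendsto_const_nhds,
    fun k => frechet_at hdom hzb (hvk k) (mul_pos (hsq_pos k) ht) (hvkt k)⟩
  have h0 : Filter.Tendsto sq Filter.atTop (𝓝 0) := tendsto_one_div_add_atTop_nhds_zero_nat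
  have h1 : Filter.Tendsto vk Filter.atTop (𝓝 vb) := by
    have h2 : Filter.Tendsto (fun k => vb + sq k • (v₀ - vb)) Filter.atTop
        (𝓝 (vb + (0:ℝ) • (v₀ - vb))) := tendsto_const_nhds.add (h0.smul_const _)
    simpa using h2
  have hcont : Continuous (fun v : Euc m => pl2 zb v) :=
    (WithLp.prodContinuousLinearEquiv 2 ℝ (Euc m) (Euc m)).symm.continuous.comp
      (continuous_const.prodMk continuous_id)
  exact (hcont.tendsto vb).comp h1
end MyCPWL

/-- `∂²θ(zb,vb)(0) = S(zb)` for every `vb ∈ ∂θ(zb)`, where `S(zb)` is the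
linear subspace parallel to the affine hull of `∂θ(zb)`; in particular `∂²θ(zb,vb)(0)` is
independent of the choice of `vb ∈ ∂θ(zb)`. -/
theorem sosd_cpwl_at_zero_eq_parallel_subspace {m l p : ℕ} (hl : 0 < l)
    (a : Fin l → Euc m) (α : Fin l → ℝ) (d : Fin p → Euc m) (β : Fin p → ℝ)
    (hdom : (cpwlDom d β).Nonempty) (zb : Euc m) (hzb : zb ∈ cpwlDom d β) :
    ∀ vb ∈ subdiff (cpwlFun a α d β) zb,
      sosd (cpwlFun a α d β) zb vb 0 = (Spar (cpwlFun a α d β) zb : Set (Euc m)) := by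
  intro vb hvb
  ext w
  show pl2 w (-(0:Euc m)) ∈ limitingNormal (MyCPWL.GG a α d β) (pl2 zb vb) ↔ _
  rw [neg_zero]
  constructor
  · intro hw
    have h := MyCPWL.sosd_subset_spar hl hdom hzb hvb (w := w) hw
    exact h
  · intro hw
    have hw' : w ∈ (affineSpan ℝ (subdiff (cpwlFun a α d β) zb)).direction := hw
    exact MyCPWL.spar_subset_sosd hdom hzb hvb hw'
end
end

section
/- Let θ be a proper convex piecewise linear function on ℝ^m and z̄ ∈ dom θ. Then the linear subspace S(z̄) parallel to the affine hull of ∂θ(z̄) is given explicitly by S(z̄) = span{a_i − a_j : i,j ∈ K(z̄)} + span{d_i : i ∈ I(z̄)}. -/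
noncomputable section
open Set Filter Topology Metric
open scoped RealInnerProductSpace Pointwise NNReal Classical

variable {F G : Type*} [NormedAddCommGroup F] [InnerProductSpace ℝ F]
  [NormedAddCommGroup G] [InnerProductSpace ℝ G]

section AuxCPWL

variable {m l p : ℕ} (a : Fin l → Euc m) (α : Fin l → ℝ) (d : Fin p → Euc m) (β : Fin p → ℝ)

lemma cpwlFun_of_mem {z : Euc m} (hz : z ∈ cpwlDom d β) :
    cpwlFun a α d β z = (((⨆ i, (⟪a i, z⟫ - α i)) : ℝ) : EReal) := if_pos hz

lemma le_sup_aux (z : Euc m) (i : Fin l) :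
    ⟪a i, z⟫ - α i ≤ ⨆ j, (⟪a j, z⟫ - α j) :=
  le_ciSup (f := fun j => ⟪a j, z⟫ - α j) (Set.Finite.bddAbove (Set.finite_range _)) i

lemma mem_Kact_iff {z : Euc m} (hz : z ∈ cpwlDom d β) (i : Fin l) :
    i ∈ Kact a α d β z ↔ (⨆ j, (⟪a j, z⟫ - α j)) = ⟪a i, z⟫ - α i := by
  unfold Kact
  rw [Set.mem_setOf_eq, cpwlFun_of_mem a α d β hz, EReal.coe_eq_coe_iff]

lemma mem_subdiff_of_forall {zb : Euc m} (hzb : zb ∈ cpwlDom d β) (v : Euc m)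
    (h : ∀ z ∈ cpwlDom d β,
      (⨆ i, (⟪a i, zb⟫ - α i)) + ⟪v, z - zb⟫ ≤ ⨆ i, (⟪a i, z⟫ - α i)) :
    v ∈ subdiff (cpwlFun a α d β) zb := by
  intro z'
  rw [cpwlFun_of_mem a α d β hzb]
  unfold cpwlFun
  by_cases hz' : z' ∈ cpwlDom d β
  · rw [if_pos hz', ← EReal.coe_add, EReal.coe_le_coe_iff]
    exact h z' hz'
  · rw [if_neg hz']; exact le_top

end AuxCPWL

/-- The subspace parallel to the affine hull of `∂θ(zb)` is
`S(zb) = span{a i - a j : i,j ∈ K(zb)} + span{d i : i ∈ I(zb)}`. -/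
theorem parallel_subspace_eq_span_add_span {m l p : ℕ} (hl : 0 < l)
    (a : Fin l → Euc m) (α : Fin l → ℝ) (d : Fin p → Euc m) (β : Fin p → ℝ)
    (hdom : (cpwlDom d β).Nonempty) (zb : Euc m) (hzb : zb ∈ cpwlDom d β) :
    (Spar (cpwlFun a α d β) zb : Set (Euc m)) =
      (Submodule.span ℝ
          (Set.image2 (fun i j => a i - a j) (Kact a α d β zb) (Kact a α d β zb)) : Set (Euc m)) +
      (Submodule.span ℝ (d '' Iact d β zb) : Set (Euc m)) := by
  haveI : Nonempty (Fin l) := ⟨⟨0, hl⟩⟩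
  set K := Kact a α d β zb with hKdef
  set I := Iact d β zb with hIdef
  set T1 : Submodule ℝ (Euc m) :=
    Submodule.span ℝ (Set.image2 (fun i j => a i - a j) K K) with hT1
  set T2 : Submodule ℝ (Euc m) := Submodule.span ℝ (d '' I) with hT2
  -- the sup is attained at some i0
  obtain ⟨i0, hi0max⟩ := Finite.exists_max (fun i => ⟪a i, zb⟫ - α i)
  have hi0 : i0 ∈ K := by
    rw [hKdef, mem_Kact_iff a α d β hzb]
    exact le_antisymm (ciSup_le hi0max) (le_sup_aux a α zb i0)
  -- active gradients are subgradients
  have hsubK : ∀ i ∈ K, a i ∈ subdiff (cpwlFun a α d β) zb := by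
    intro i hi
    apply mem_subdiff_of_forall a α d β hzb
    intro z hz
    rw [(mem_Kact_iff a α d β hzb i).1 hi, inner_sub_right]
    linarith [le_sup_aux a α z i]
  -- active gradient plus active normal is a subgradient
  have hsubKI : ∀ j ∈ I, a i0 + d j ∈ subdiff (cpwlFun a α d β) zb := by
    intro j hj
    apply mem_subdiff_of_forall a α d β hzb
    intro z hz
    rw [(mem_Kact_iff a α d β hzb i0).1 hi0, inner_add_left, inner_sub_right, inner_sub_right]
    have h1 := le_sup_aux a α z i0
    have h2 : ⟪d j, z⟫ ≤ β j := hz j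
    have h3 : ⟪d j, zb⟫ = β j := hj
    linarith
  -- key inclusion: every subgradient lies in a i0 + (T1 ⊔ T2)
  have hsub_sub : ∀ v ∈ subdiff (cpwlFun a α d β) zb, v - a i0 ∈ T1 ⊔ T2 := by
    intro v hv
    rw [← Submodule.orthogonal_orthogonal (T1 ⊔ T2), Submodule.mem_orthogonal]
    intro u hu
    have hu' : ∀ w ∈ T1 ⊔ T2, ⟪w, u⟫ = 0 := (Submodule.mem_orthogonal _ _).1 hu
    have huA : ∀ i ∈ K, ⟪a i, u⟫ = ⟪a i0, u⟫ := by
      intro i hi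
      have hmem : a i - a i0 ∈ T1 ⊔ T2 :=
        Submodule.mem_sup_left (Submodule.subset_span (Set.mem_image2_of_mem hi hi0))
      have h0 := hu' _ hmem
      rw [inner_sub_left] at h0
      linarith
    have huD : ∀ j ∈ I, ⟪d j, u⟫ = 0 := fun j hj =>
      hu' _ (Submodule.mem_sup_right (Submodule.subset_span ⟨j, hj, rfl⟩))
    -- E1 : zb + t • u stays in the domain for small t
    have E1 : ∀ᶠ t in 𝓝 (0 : ℝ), zb + t • u ∈ cpwlDom d β := by
      have : ∀ᶠ t in 𝓝 (0 : ℝ), ∀ i, ⟪d i, zb + t • u⟫ ≤ β i := by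
        rw [eventually_all]
        intro i
        have hxpand : ∀ t : ℝ, ⟪d i, zb + t • u⟫ = ⟪d i, zb⟫ + t * ⟪d i, u⟫ := by
          intro t; rw [inner_add_right, real_inner_smul_right]
        by_cases hi : i ∈ I
        · refine Filter.Eventually.of_forall fun t => ?_
          rw [hxpand t, huD i hi]
          have : ⟪d i, zb⟫ = β i := hi
          simp [this]
        · have hlt : ⟪d i, zb⟫ < β i := lt_of_le_of_ne (hzb i) hi
          have hc : Filter.Tendsto (fun t : ℝ => ⟪d i, zb⟫ + t * ⟪d i, u⟫) (𝓝 0)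
              (𝓝 (⟪d i, zb⟫)) := by
            have : Filter.Tendsto (fun t : ℝ => ⟪d i, zb⟫ + t * ⟪d i, u⟫) (𝓝 0)
                (𝓝 (⟪d i, zb⟫ + 0 * ⟪d i, u⟫)) := by
              apply Filter.Tendsto.add tendsto_const_nhds
              exact (continuous_id.mul continuous_const).tendsto 0
            simpa using this
          filter_upwards [hc.eventually_lt tendsto_const_nhds hlt] with t ht
          rw [hxpand t]; exact ht.le
      exact this
    -- E2 : each piece is bounded by the predicted value for small t
    have E2 : ∀ᶠ t in 𝓝 (0 : ℝ), ∀ i,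
        ⟪a i, zb + t • u⟫ - α i ≤ (⨆ j, (⟪a j, zb⟫ - α j)) + t * ⟪a i0, u⟫ := by
      rw [eventually_all]
      intro i
      have hxpand : ∀ t : ℝ, ⟪a i, zb + t • u⟫ = ⟪a i, zb⟫ + t * ⟪a i, u⟫ := by
        intro t; rw [inner_add_right, real_inner_smul_right]
      by_cases hi : i ∈ K
      · refine Filter.Eventually.of_forall fun t => ?_
        rw [hxpand t, huA i hi, (mem_Kact_iff a α d β hzb i).1 hi]
        ring_nf
        exact le_refl _
      · have hlt : ⟪a i, zb⟫ - α i < ⨆ j, (⟪a j, zb⟫ - α j) := by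
          refine lt_of_le_of_ne (le_sup_aux a α zb i) fun h => hi ?_
          rw [hKdef, mem_Kact_iff a α d β hzb]
          exact h.symm
        have hcf : Filter.Tendsto (fun t : ℝ => ⟪a i, zb⟫ + t * ⟪a i, u⟫ - α i) (𝓝 0)
            (𝓝 (⟪a i, zb⟫ - α i)) := by
          have : Filter.Tendsto (fun t : ℝ => ⟪a i, zb⟫ + t * ⟪a i, u⟫ - α i) (𝓝 0)
              (𝓝 (⟪a i, zb⟫ + 0 * ⟪a i, u⟫ - α i)) := by
            apply Filter.Tendsto.sub ?_ tendsto_const_nhds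
            exact Filter.Tendsto.add tendsto_const_nhds
              ((continuous_id.mul continuous_const).tendsto 0)
          simpa using this
        have hcg : Filter.Tendsto
            (fun t : ℝ => (⨆ j, (⟪a j, zb⟫ - α j)) + t * ⟪a i0, u⟫) (𝓝 0)
            (𝓝 (⨆ j, (⟪a j, zb⟫ - α j))) := by
          have : Filter.Tendsto
              (fun t : ℝ => (⨆ j, (⟪a j, zb⟫ - α j)) + t * ⟪a i0, u⟫) (𝓝 0)
              (𝓝 ((⨆ j, (⟪a j, zb⟫ - α j)) + 0 * ⟪a i0, u⟫)) := by
            apply Filter.Tendsto.add tendsto_const_nhds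
            exact (continuous_id.mul continuous_const).tendsto 0
          simpa using this
        filter_upwards [hcf.eventually_lt hcg hlt] with t ht
        rw [hxpand t]
        exact ht.le
    -- E3 : the value of the sup along the line
    have E3 : ∀ᶠ t in 𝓝 (0 : ℝ),
        (⨆ j, (⟪a j, zb + t • u⟫ - α j)) = (⨆ j, (⟪a j, zb⟫ - α j)) + t * ⟪a i0, u⟫ := by
      filter_upwards [E2] with t ht
      refine le_antisymm (ciSup_le fun i => ht i) ?_
      have h1 : ⟪a i0, zb + t • u⟫ - α i0 = (⨆ j, (⟪a j, zb⟫ - α j)) + t * ⟪a i0, u⟫ := by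
        rw [inner_add_right, real_inner_smul_right, (mem_Kact_iff a α d β hzb i0).1 hi0]
        ring
      rw [← h1]
      exact le_sup_aux a α _ i0
    -- E4 : the subgradient inequality along the line
    have E4 : ∀ᶠ t in 𝓝 (0 : ℝ), t * ⟪v, u⟫ ≤ t * ⟪a i0, u⟫ := by
      filter_upwards [E1, E3] with t h1 h3
      have hv' := hv (zb + t • u)
      rw [cpwlFun_of_mem a α d β hzb, cpwlFun_of_mem a α d β h1, ← EReal.coe_add,
        EReal.coe_le_coe_iff] at hv'
      have hvin : ⟪v, zb + t • u - zb⟫ = t * ⟪v, u⟫ := by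
        have : zb + t • u - zb = t • u := by abel
        rw [this, real_inner_smul_right]
      rw [hvin, h3] at hv'
      linarith
    -- conclude equality of inner products
    obtain ⟨ε, hε, hball⟩ := Metric.eventually_nhds_iff.1 E4
    have h1 : (ε / 2) * ⟪v, u⟫ ≤ (ε / 2) * ⟪a i0, u⟫ := by
      apply hball
      rw [Real.dist_eq, sub_zero, abs_of_pos (half_pos hε)]
      linarith
    have h2 : (-(ε / 2)) * ⟪v, u⟫ ≤ (-(ε / 2)) * ⟪a i0, u⟫ := by
      apply hball
      rw [Real.dist_eq, sub_zero, abs_neg, abs_of_pos (half_pos hε)]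
      linarith
    have heq : ⟪v, u⟫ = ⟪a i0, u⟫ := by nlinarith [half_pos hε]
    have hc1 : ⟪u, v⟫ = ⟪v, u⟫ := real_inner_comm v u
    have hc2 : ⟪u, a i0⟫ = ⟪a i0, u⟫ := real_inner_comm (a i0) u
    rw [inner_sub_right]
    linarith
  -- assemble
  have main : Spar (cpwlFun a α d β) zb = T1 ⊔ T2 := by
    apply le_antisymm
    · have h1 : affineSpan ℝ (subdiff (cpwlFun a α d β) zb) ≤
          AffineSubspace.mk' (a i0) (T1 ⊔ T2) := by
        rw [affineSpan_le]
        intro v hv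
        rw [AffineSubspace.mem_coe, AffineSubspace.mem_mk']
        exact hsub_sub v hv
      have h2 := AffineSubspace.direction_le h1
      rwa [AffineSubspace.direction_mk'] at h2
    · apply sup_le
      · rw [Submodule.span_le]
        rintro x ⟨i, hi, j, hj, rfl⟩
        have := AffineSubspace.vsub_mem_direction
          (subset_affineSpan ℝ _ (hsubK i hi)) (subset_affineSpan ℝ _ (hsubK j hj))
        simpa [vsub_eq_sub, Spar] using this
      · rw [Submodule.span_le]
        rintro x ⟨j, hj, rfl⟩
        have := AffineSubspace.vsub_mem_direction
          (subset_affineSpan ℝ _ (hsubKI j hj)) (subset_affineSpan ℝ _ (hsubK i0 hi0))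
        simpa [vsub_eq_sub, Spar] using this
  rw [show Spar (cpwlFun a α d β) zb = T1 ⊔ T2 from main, Submodule.coe_sup]
end
end
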